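/- arXiv:1811.06155 — 5 statements merged into one kernel-verified Lean document; each statement's English description precedes it below -/
import Mathlib

section
/- For every natural number k there exists a finite tournament T (an orientation of a complete graph) whose arc set can be partitioned into directed 3-cycles — equivalently, T is obtained from a Steiner triple system by cyclically orienting each triple — such that the cop number of T is at least k. -/
open Classical

universe u

namespace CopsRobbers

variable {V : Type u}

/-- `CatchIn A k t c r` holds when, in the cops-and-robbers game on the digraph
with arc relation `A`, with the `k` cops currently at positions `c`, the robber
currently at `r`, and the cops to move, the cops can guarantee that some cop
occupies the robber's vertex within `t` further rounds (in each round every cop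
either stays or moves along an out-arc, then the robber either stays or moves
along an out-arc; capture may occur right after the cops' move or after the
robber's move). -/
inductive CatchIn (A : V → V → Prop) (k : ℕ) : ℕ → (Fin k → V) → V → Prop
  | caught {t : ℕ} {c : Fin k → V} {r : V} (h : ∃ i, c i = r) : CatchIn A k t c r
  | stepCatch {t : ℕ} {c : Fin k → V} {r : V} (c' : Fin k → V)
      (hc : ∀ i, c' i = c i ∨ A (c i) (c' i)) (h : ∃ i, c' i = r) :
      CatchIn A k (t + 1) c r
  | step {t : ℕ} {c : Fin k → V} {r : V} (c' : Fin k → V)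
      (hc : ∀ i, c' i = c i ∨ A (c i) (c' i))
      (h : ∀ r' : V, r' = r ∨ A r r' → CatchIn A k t c' r') :
      CatchIn A k (t + 1) c r

/-- `k` cops can choose initial positions guaranteeing capture within `t` rounds,
no matter which starting vertex the robber then chooses. -/
def CopsWinIn (A : V → V → Prop) (k t : ℕ) : Prop :=
  ∃ c : Fin k → V, ∀ r : V, CatchIn A k t c r

/-- `k` cops have a winning strategy on the digraph with arc relation `A`. -/
def CopsWin (A : V → V → Prop) (k : ℕ) : Prop := ∃ t, CopsWinIn A k t

/-- The cop number of a digraph: the least `k` such that `k` cops have a winning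
strategy. -/
noncomputable def copNumber (A : V → V → Prop) : ℕ := sInf {k | CopsWin A k}

/-- The capture time of a digraph: the least `t` such that `copNumber A` cops
can guarantee capture within `t` rounds. -/
noncomputable def captureTime (A : V → V → Prop) : ℕ :=
  sInf {t | CopsWinIn A (copNumber A) t}

/-- `A` is an orientation of the simple graph `G`: each edge of `G` is given
exactly one direction, and there are no other arcs. -/
def IsOrientation (G : SimpleGraph V) (A : V → V → Prop) : Prop :=
  (∀ u v, G.Adj u v ↔ (A u v ∨ A v u)) ∧ ∀ u v, A u v → ¬ A v u

/-- An oriented graph: a digraph with no loops and no pair of opposite arcs. -/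
def IsOriented (A : V → V → Prop) : Prop := ∀ u v, A u v → ¬ A v u

/-- A digraph is strongly connected if every vertex is reachable from every
other by a directed path. -/
def StronglyConnected (A : V → V → Prop) : Prop :=
  ∀ u v : V, Relation.ReflTransGen A u v


/-- A tournament: a loopless digraph in which every pair of distinct vertices
is joined by exactly one arc. -/
def IsTournament (A : V → V → Prop) : Prop :=
  (∀ v, ¬ A v v) ∧ ∀ u v : V, u ≠ v → (A u v ↔ ¬ A v u)

/-- A set of arcs forming a directed 3-cycle. -/
def IsCyclicTriple (A : V → V → Prop) (s : Set (V × V)) : Prop :=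
  ∃ x y z : V, A x y ∧ A y z ∧ A z x ∧ s = {(x, y), (y, z), (z, x)}

section Game

variable {A : V → V → Prop}

theorem noCatch {j : ℕ}
    (hirr : ∀ v, ¬ A v v) (hasym : ∀ u v, A u v → ¬ A v u)
    (hD : ∀ (r : V) (w : Fin j → V), (∀ i, w i ≠ r) →
      ∃ r', (r' = r ∨ A r r') ∧ ∀ i, A r' (w i))
    {t : ℕ} {c : Fin j → V} {r : V} (hcatch : CatchIn A j t c r) :
    ¬ (∀ i, A r (c i)) := by
  induction hcatch with
  | @caught t c r h =>
      intro hdom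
      obtain ⟨i, hi⟩ := h
      exact hirr r (hi ▸ hdom i)
  | @stepCatch t c r c' hc h =>
      intro hdom
      obtain ⟨i, hi⟩ := h
      rcases hc i with h1 | h1
      · rw [h1] at hi; exact hirr r (hi ▸ hdom i)
      · rw [hi] at h1; exact hasym r (c i) (hdom i) h1
  | @step t c r c' hc h ih =>
      intro hdom
      have hne : ∀ i, c' i ≠ r := by
        intro i hi
        rcases hc i with h1 | h1
        · rw [h1] at hi; exact hirr r (hi ▸ hdom i)
        · rw [hi] at h1; exact hasym r (c i) (hdom i) h1
      obtain ⟨r', hr', hdom'⟩ := hD r c' hne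
      exact ih r' hr' hdom'

theorem copNumber_ge {k : ℕ} [Fintype V]
    (hirr : ∀ v, ¬ A v v) (hasym : ∀ u v, A u v → ¬ A v u)
    (hD : ∀ j, j < k → ∀ (r : V) (w : Fin j → V), (∀ i, w i ≠ r) →
      ∃ r', (r' = r ∨ A r r') ∧ ∀ i, A r' (w i))
    (hbig : ∀ j, j < k → ∀ c : Fin j → V, ∃ r, ∀ i, c i ≠ r) :
    k ≤ copNumber A := by
  have hwin : CopsWin A (Fintype.card V) := by
    refine ⟨0, fun i => (Fintype.equivFin V).symm i, fun r => ?_⟩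
    exact CatchIn.caught ⟨Fintype.equivFin V r, by simp⟩
  refine le_csInf ⟨Fintype.card V, hwin⟩ ?_
  intro b hb
  by_contra hlt
  push_neg at hlt
  obtain ⟨t, c, hall⟩ := hb
  obtain ⟨r, hr⟩ := hbig b hlt c
  obtain ⟨r', _, hdom'⟩ := hD b hlt r c (fun i => hr i)
  exact noCatch hirr hasym (hD b hlt) (hall r') hdom'

end Game

lemma sq_lt_two_pow : ∀ j, 5 ≤ j → j^2 < 2^j := by
  intro j hj
  induction j, hj using Nat.le_induction with
  | base => norm_num
  | succ j hj ih =>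
      have key : (j+1)^2 ≤ 2*j^2 := by nlinarith
      calc (j+1)^2 ≤ 2*j^2 := key
        _ < 2*2^j := by omega
        _ = 2^(j+1) := by rw [pow_succ]; ring

lemma lin_le_three_pow (a b : ℕ) : ∃ j, 1 ≤ j ∧ a*j + b ≤ 3^j := by
  refine ⟨max (a+b+1) 5, le_trans (by omega) (le_max_left _ _), ?_⟩
  set j := max (a+b+1) 5 with hj
  have hj5 : 5 ≤ j := le_max_right _ _
  have hjab : a + b + 1 ≤ j := le_max_left _ _
  have h1 : a*j + b ≤ (a+b)*j := by
    have : b ≤ b*j := Nat.le_mul_of_pos_right b (by omega)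
    calc a*j + b ≤ a*j + b*j := by omega
      _ = (a+b)*j := by ring
  have h2 : (a+b)*j ≤ j*j := Nat.mul_le_mul_right j (by omega)
  have h3 : j*j < 2^j := by
    have := sq_lt_two_pow j hj5
    calc j*j = j^2 := by ring
      _ < 2^j := this
  have h4 : 2^j ≤ 3^j := Nat.pow_le_pow_left (by norm_num) j
  omega

lemma binom2 (C : ℕ) : ∀ a, C^(a+1) + (a+1)*C^a ≤ (C+1)^(a+1) := by
  intro a
  induction a with
  | zero => simp
  | succ a ih =>
      have hexp : (C^(a+1) + (a+1)*C^a)*(C+1)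
          = C^(a+2) + (a+2)*C^(a+1) + (a+1)*C^a := by ring
      calc C^(a+2) + (a+2)*C^(a+1)
          ≤ C^(a+2) + (a+2)*C^(a+1) + (a+1)*C^a := Nat.le_add_right _ _
        _ = (C^(a+1) + (a+1)*C^a)*(C+1) := hexp.symm
        _ ≤ (C+1)^(a+1)*(C+1) := Nat.mul_le_mul_right _ ih
        _ = (C+1)^(a+2) := by rw [← pow_succ]

lemma twoC {C : ℕ} (hC : 1 ≤ C) : 2*C^C ≤ (C+1)^C := by
  obtain ⟨c, rfl⟩ : ∃ c, C = c+1 := ⟨C-1, by omega⟩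
  have h := binom2 (c+1) c
  have h2 : (c+1)*(c+1)^c = (c+1)^(c+1) := by rw [← pow_succ']
  calc 2*(c+1)^(c+1) = (c+1)^(c+1) + (c+1)*(c+1)^c := by rw [h2]; ring
    _ ≤ (c+2)^(c+1) := by convert h using 2 <;> ring_nf
    _ = ((c+1)+1)^(c+1) := by norm_num

lemma pow_boost {B C : ℕ} (hC : 1 ≤ C) (hBC : C + 1 = B) (m : ℕ) :
    2^(m/C) * C^m ≤ B^m := by
  have hm : C * (m / C) + m % C = m := Nat.div_add_mod m C
  have hCle : C ≤ C + 1 := Nat.le_succ C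
  calc 2^(m/C) * C^m = 2^(m/C) * (C^(C*(m/C)) * C^(m%C)) := by rw [← pow_add, hm]
    _ = (2^(m/C) * (C^C)^(m/C)) * C^(m%C) := by rw [← pow_mul]; ring
    _ = (2*C^C)^(m/C) * C^(m%C) := by rw [mul_pow]
    _ ≤ ((C+1)^C)^(m/C) * (C+1)^(m%C) :=
        Nat.mul_le_mul (Nat.pow_le_pow_left (twoC hC) _) (Nat.pow_le_pow_left hCle _)
    _ = (C+1)^(C*(m/C)) * (C+1)^(m%C) := by rw [← pow_mul]
    _ = (C+1)^m := by rw [← pow_add, hm]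
    _ = B^m := by rw [hBC]

lemma numeric (k' : ℕ) : ∃ n, k' ≤ n ∧ 1 ≤ n ∧
    (3^n)^k' * (2^(k'+1) - 1)^((3^(n-k') - 1)/2)
      < (2^(k'+1))^((3^(n-k') - 1)/2) := by
  set B := 2^(k'+1) with hB
  set C := 2^(k'+1) - 1 with hC
  have hB2 : 2 ≤ B := by
    rw [hB]
    calc 2 = 2^1 := by norm_num
      _ ≤ 2^(k'+1) := Nat.pow_le_pow_right (by norm_num) (by omega)
  have hC1 : 1 ≤ C := by omega
  have hBC : C + 1 = B := by omega
  obtain ⟨j, hj1, hjle⟩ := lin_le_three_pow (2^(k'+3)*k') (2^(k'+3)*k'*k' + 2^(k'+2) + 1)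
  refine ⟨k' + j, by omega, by omega, ?_⟩
  have hnk : k' + j - k' = j := by omega
  rw [hnk]
  set n := k' + j with hn
  set M := (3^j - 1)/2 with hM
  -- step (i): identity
  have hid : 2^(k'+3)*k'*j + (2^(k'+3)*k'*k' + 2^(k'+2) + 1)
      = 2^(k'+2)*(2*(n*k')+1) + 1 := by
    rw [hn]
    have : (2:ℕ)^(k'+3) = 2^(k'+2)*2 := by rw [← pow_succ]
    rw [this]
    ring
  have hx : 2^(k'+2)*(2*(n*k')+1) + 1 ≤ 3^j := by rw [← hid]; exact hjle
  -- step (ii): M ≥ B*(2nk'+1)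
  have h2B : 2^(k'+2) = 2*B := by rw [hB, ← pow_succ']
  have hMB : B*(2*(n*k')+1) ≤ M := by
    rw [h2B] at hx
    have h3 : 2*(B*(2*(n*k')+1)) + 1 ≤ 3^j := by
      calc 2*(B*(2*(n*k')+1)) + 1 = 2*B*(2*(n*k')+1) + 1 := by ring
        _ ≤ 3^j := hx
    omega
  -- step (iii)
  have hMC : 2*(n*k') + 1 ≤ M/C := by
    rw [Nat.le_div_iff_mul_le (by omega : 0 < C)]
    calc (2*(n*k')+1)*C ≤ (2*(n*k')+1)*B := Nat.mul_le_mul_left _ (by omega)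
      _ = B*(2*(n*k')+1) := by ring
      _ ≤ M := hMB
  -- step (iv)
  have hpow : (3^n)^k' < 2^(M/C) := by
    calc (3^n)^k' = 3^(n*k') := by rw [← pow_mul]
      _ ≤ 4^(n*k') := Nat.pow_le_pow_left (by norm_num) _
      _ = 2^(2*(n*k')) := by rw [show (4:ℕ) = 2^2 from rfl, ← pow_mul]
      _ < 2^(2*(n*k')+1) := Nat.pow_lt_pow_right (by norm_num) (by omega)
      _ ≤ 2^(M/C) := Nat.pow_le_pow_right (by norm_num) hMC
  -- final
  calc (3^n)^k' * C^M < 2^(M/C) * C^M := by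
        apply (Nat.mul_lt_mul_right ?_).mpr hpow
        exact Nat.pow_pos (by omega)
    _ ≤ B^M := pow_boost hC1 hBC M


abbrev G3 (n : ℕ) := Fin n → ZMod 3

variable {n : ℕ}

lemma three_torsion (x : G3 n) : x + x + x = 0 := funext fun i => by
  have h : ∀ v : ZMod 3, v + v + v = 0 := by decide
  simpa using h (x i)

lemma two_torsion_zero {x : G3 n} (h : x + x = 0) : x = 0 := by
  have h3 := three_torsion x
  have : x = x + x + x - (x + x) := by abel
  rw [h3, h] at this
  simpa using this

lemma neg_ne_self {x : G3 n} (hx : x ≠ 0) : -x ≠ x := fun h => by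
  apply hx
  apply two_torsion_zero
  calc x + x = -x + x := by rw [h]
  _ = 0 := neg_add_cancel x

noncomputable def pos (x : G3 n) : Prop :=
  Fintype.equivFin (G3 n) x < Fintype.equivFin (G3 n) (-x)

lemma pos_zero : ¬ pos (0 : G3 n) := by simp [pos]

lemma pos_ne_zero {x : G3 n} (h : pos x) : x ≠ 0 := fun h0 => pos_zero (h0 ▸ h)

lemma pos_neg {x : G3 n} (hx : x ≠ 0) : pos (-x) ↔ ¬ pos x := by
  unfold pos
  rw [neg_neg]
  have hne : Fintype.equivFin (G3 n) (-x) ≠ Fintype.equivFin (G3 n) x :=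
    fun h => neg_ne_self hx ((Fintype.equivFin (G3 n)).injective h)
  constructor
  · intro h h'; exact absurd h (asymm h')
  · intro h; rcases lt_or_gt_of_ne hne with h' | h'
    · exact h'
    · exact absurd h' h

noncomputable def rep (x : G3 n) : G3 n := if pos x then x else -x

lemma rep_eq_or (x : G3 n) : rep x = x ∨ rep x = -x := by
  unfold rep; split <;> simp

lemma rep_pos {x : G3 n} (hx : x ≠ 0) : pos (rep x) := by
  unfold rep; split
  · assumption
  · exact (pos_neg hx).mpr ‹¬ pos x›

noncomputable def memS (g : G3 n → Bool) (x : G3 n) : Bool :=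
  if pos x then g x else !(g (-x))

lemma memS_congr {g h : G3 n → Bool} {x : G3 n} (he : g (rep x) = h (rep x)) :
    memS g x = memS h x := by
  unfold memS
  unfold rep at he
  split <;> simp_all

lemma memS_neg (g : G3 n → Bool) {x : G3 n} (hx : x ≠ 0) :
    memS g (-x) = !(memS g x) := by
  unfold memS
  by_cases h : pos x
  · rw [if_pos h, if_neg (by rw [pos_neg hx]; exact not_not_intro h), neg_neg]
  · rw [if_neg h, if_pos ((pos_neg hx).mpr h), Bool.not_not]

noncomputable def Sg (g : G3 n → Bool) : Set (G3 n) := {x | x ≠ 0 ∧ memS g x = true}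

noncomputable def Arc (g : G3 n → Bool) (u v : G3 n) : Prop := v - u ∈ Sg g

lemma Sg_neg {g : G3 n → Bool} {x : G3 n} (hx : x ≠ 0) :
    (-x ∈ Sg g ↔ ¬ (x ∈ Sg g)) := by
  have hnx : -x ≠ 0 := neg_ne_zero.mpr hx
  constructor
  · rintro ⟨-, hm⟩ ⟨-, hm'⟩
    rw [memS_neg g hx, hm'] at hm
    simp at hm
  · intro hns
    refine ⟨hnx, ?_⟩
    rw [memS_neg g hx, Bool.not_eq_true']
    have h1 : ¬ memS g x = true := fun hm => hns ⟨hx, hm⟩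
    exact Bool.not_eq_true _ ▸ (Bool.eq_false_iff.mpr (fun h => h1 h))

theorem arc_tournament (g : G3 n → Bool) : IsTournament (Arc g) := by
  constructor
  · intro v h
    exact h.1 (by simp)
  · intro u v huv
    have hx : v - u ≠ 0 := sub_ne_zero_of_ne (Ne.symm huv)
    have h : u - v = -(v - u) := by abel
    rw [Arc, Arc, h, Sg_neg hx, not_not]

section Triples

variable (g : G3 n → Bool)

def triD (a d : G3 n) : Set (G3 n × G3 n) :=
  {(a, a + d), (a + d, a + d + d), (a + d + d, a)}

lemma triD_shift (a d : G3 n) : triD (a + d) d = triD a d := by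
  have h3 : a + d + d + d = a := by
    have := three_torsion d
    have h : a + d + d + d = a + (d + d + d) := by abel
    rw [h, this, add_zero]
  unfold triD
  rw [h3]
  ext p
  simp only [Set.mem_insert_iff, Set.mem_singleton_iff]
  tauto

lemma neg_two_smul (d : G3 n) : -d - d = d := by
  have := three_torsion d
  have h : -d - d = d - (d + d + d) := by abel
  rw [h, this, sub_zero]

lemma arc_triD {u v : G3 n} (h : Arc g u v) :
    Arc g u v ∧ Arc g v (v + (v - u)) ∧ Arc g (v + (v - u)) u := by
  have h1 : v + (v - u) - v = v - u := by abel
  have h2 : u - (v + (v - u)) = -(v - u) - (v - u) := by abel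
  refine ⟨h, ?_, ?_⟩
  · rw [Arc, h1]; exact h
  · rw [Arc, h2, neg_two_smul]; exact h

lemma triD_eq_tri (u v : G3 n) :
    triD u (v - u) = {(u, v), (v, v + (v - u)), (v + (v - u), u)} := by
  have h1 : u + (v - u) = v := by abel
  rw [triD, h1]

theorem triple_partition (g : G3 n → Bool) :
    ∃ P : Set (Set (G3 n × G3 n)),
      (∀ s ∈ P, IsCyclicTriple (Arc g) s) ∧
      (∀ u v : G3 n, Arc g u v → ∃! s, s ∈ P ∧ (u, v) ∈ s) := by
  classical
  refine ⟨{s | ∃ u v, Arc g u v ∧ s = triD u (v - u)}, ?_, ?_⟩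
  · rintro s ⟨u, v, h, rfl⟩
    obtain ⟨h1, h2, h3⟩ := arc_triD g h
    exact ⟨u, v, v + (v - u), h1, h2, h3, triD_eq_tri u v⟩
  · intro u v h
    refine ⟨triD u (v - u), ⟨⟨u, v, h, rfl⟩, ?_⟩, ?_⟩
    · rw [triD_eq_tri]; simp
    · rintro s ⟨⟨a, b, hab, rfl⟩, hmem⟩
      rw [triD_eq_tri] at hmem
      rcases hmem with h1 | h1 | h1
      · obtain ⟨hu, hv⟩ := Prod.ext_iff.mp h1
        simp only at hu hv
        rw [hu, hv]
      · obtain ⟨hu, hv⟩ := Prod.ext_iff.mp h1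
        simp only at hu hv
        rw [hu, hv]
        have h4 : b + (b - a) - b = b - a := by abel
        have key := triD_shift a (b - a)
        have hab' : a + (b - a) = b := by abel
        rw [hab'] at key
        rw [h4]
        exact key.symm
      · rw [Set.mem_singleton_iff] at h1
        obtain ⟨hu, hv⟩ := Prod.ext_iff.mp h1
        simp only at hu hv
        rw [hu, hv]
        have h4 : a - (b + (b - a)) = b - a := by
          have h5 : a - (b + (b - a)) = -(b - a) - (b - a) := by abel
          rw [h5, neg_two_smul]
        rw [h4]
        have key1 := triD_shift a (b - a)
        have key2 := triD_shift (a + (b - a)) (b - a)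
        have e1 : a + (b - a) = b := by abel
        have e2 : a + (b - a) + (b - a) = b + (b - a) := by rw [e1]
        rw [e2, e1] at key2
        rw [e1] at key1
        exact (key2.trans key1).symm

end Triples

noncomputable def Sat (g : G3 n → Bool) (F : Finset (G3 n)) : Prop :=
  ∀ x ∈ F, memS g x = true

lemma rep_eq_imp {x y : G3 n} (h : rep x = rep y) : x = y ∨ x = -y := by
  unfold rep at h
  split_ifs at h
  · exact Or.inl h
  · exact Or.inr h
  · right; rw [← h, neg_neg]
  · exact Or.inl (neg_injective h)

lemma card_G3 : Fintype.card (G3 n) = 3^n := by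
  rw [Fintype.card_fun]; simp

lemma card_univ_bool : (Finset.univ : Finset (G3 n → Bool)).card = 2^(3^n) := by
  rw [Finset.card_univ, Fintype.card_fun, card_G3]
  norm_num

lemma step_count (K : ℕ) (S : Finset (G3 n → Bool)) (F : Finset (G3 n))
    (hne : F.Nonempty) (hcard : F.card ≤ K)
    (h0 : ∀ x ∈ F, x ≠ 0)
    (h1 : ∀ x ∈ F, ∀ y ∈ F, x ≠ -y)
    (hInv : ∀ g h : G3 n → Bool, (∀ u, u ∉ F.image rep → g u = h u) → (g ∈ S → h ∈ S)) :
    ((S.filter (fun g => ¬ Sat g F)).card) * 2^K ≤ (2^K - 1) * S.card := by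
  classical
  set Frep := F.image rep with hFrep
  set N : (G3 n → Bool) → (G3 n → Bool) :=
    fun g x => if x ∈ Frep then (if x ∈ F then true else false) else g x with hN
  have hoff : ∀ g u, u ∉ Frep → N g u = g u := by
    intro g u hu; simp only [hN, if_neg hu]
  have hmemN : ∀ g, ∀ x ∈ F, memS (N g) x = true := by
    intro g x hx
    have hx0 : x ≠ 0 := h0 x hx
    unfold memS
    split
    · -- pos x, so rep x = x ∈ Frep
      have hxF : x ∈ Frep := by
        rw [hFrep]; exact Finset.mem_image.mpr ⟨x, hx, by unfold rep; rw [if_pos ‹pos x›]⟩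
      simp only [hN, if_pos hxF, if_pos hx]
    · -- ¬ pos x, rep x = -x ∈ Frep; and -x ∉ F
      have hxF : -x ∈ Frep := by
        rw [hFrep]; exact Finset.mem_image.mpr ⟨x, hx, by unfold rep; rw [if_neg ‹¬ pos x›]⟩
      have hnxF : -x ∉ F := fun hc => h1 x hx (-x) hc (by rw [neg_neg])
      simp only [hN, if_pos hxF, if_neg hnxF]
      rfl
  have hNS : ∀ g ∈ S, N g ∈ S := fun g hg => hInv g (N g) (fun u hu => (hoff g u hu).symm) hg
  have himg : S.image N ⊆ S.filter (fun g => Sat g F) := by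
    intro b hb
    obtain ⟨g, hg, rfl⟩ := Finset.mem_image.mp hb
    exact Finset.mem_filter.mpr ⟨hNS g hg, fun x hx => hmemN g x hx⟩
  -- fiber bound
  have hfiber : ∀ b ∈ S.image N, (S.filter (fun g => N g = b)).card ≤ 2^K := by
    intro b _
    have hinj : Set.InjOn (fun (g : G3 n → Bool) (u : {u // u ∈ Frep}) => g u.1)
        ↑(S.filter (fun g => N g = b)) := by
      intro g1 hg1 g2 hg2 he
      have hb1 : N g1 = b := (Finset.mem_filter.mp hg1).2
      have hb2 : N g2 = b := (Finset.mem_filter.mp hg2).2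
      funext u
      by_cases hu : u ∈ Frep
      · exact congrFun he ⟨u, hu⟩
      · have := congrFun (hb1.trans hb2.symm) u
        rwa [hoff g1 u hu, hoff g2 u hu] at this
    have hle := Finset.card_le_card_of_injOn _ (fun g _ => Finset.mem_univ _) hinj
    calc (S.filter (fun g => N g = b)).card
        ≤ (Finset.univ : Finset ({u // u ∈ Frep} → Bool)).card := hle
      _ = 2 ^ Frep.card := by
          rw [Finset.card_univ, Fintype.card_fun]
          simp [Fintype.card_coe]
      _ ≤ 2 ^ K := Nat.pow_le_pow_right (by norm_num)
          (le_trans (Finset.card_image_le) hcard)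
  have hScard : S.card ≤ 2^K * (S.filter (fun g => Sat g F)).card := by
    calc S.card ≤ 2^K * (S.image N).card := Finset.card_le_mul_card_image S (2^K) hfiber
    _ ≤ 2^K * (S.filter (fun g => Sat g F)).card :=
        Nat.mul_le_mul_left _ (Finset.card_le_card himg)
  have hsplit : (S.filter (fun g => Sat g F)).card + (S.filter (fun g => ¬ Sat g F)).card
      = S.card := Finset.card_filter_add_card_filter_not _
  set a := S.card
  set e := (S.filter (fun g => Sat g F)).card
  set f := (S.filter (fun g => ¬ Sat g F)).card
  have hB : 1 ≤ 2^K := Nat.one_le_two_pow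
  -- f = a - e, a ≤ 2^K e
  have h2 : f * 2^K ≤ a * 2^K - a := by
    have hfe : f = a - e := by omega
    rw [hfe, Nat.sub_mul]
    have : a ≤ e * 2^K := by rw [mul_comm] at hScard; exact hScard
    omega
  have h3 : a * 2^K - a = (2^K - 1) * a := by
    rw [Nat.sub_mul, one_mul, mul_comm]
  omega
end CopsRobbers

namespace CopsRobbers

lemma chain_count (K : ℕ) (Vals : G3 n → Finset (G3 n)) (Sig : Finset (G3 n))
    (hne : ∀ t ∈ Sig, (Vals t).Nonempty) (hcard : ∀ t ∈ Sig, (Vals t).card ≤ K)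
    (h0 : ∀ t ∈ Sig, ∀ x ∈ Vals t, x ≠ 0)
    (h1 : ∀ t ∈ Sig, ∀ x ∈ Vals t, ∀ y ∈ Vals t, x ≠ -y)
    (hdisj : ∀ t ∈ Sig, ∀ t' ∈ Sig, t ≠ t' → ∀ x ∈ Vals t, ∀ y ∈ Vals t', x ≠ y ∧ x ≠ -y) :
    ((Finset.univ.filter (fun g : G3 n → Bool => ∀ t ∈ Sig, ¬ Sat g (Vals t))).card)
        * (2^K)^Sig.card
      ≤ (2^K - 1)^Sig.card * 2^(3^n) := by
  classical
  induction Sig using Finset.induction_on with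
  | empty =>
      simp only [Finset.notMem_empty, false_implies, implies_true, Finset.filter_true,
        Finset.card_empty, pow_zero, mul_one, one_mul]
      exact le_of_eq card_univ_bool
  | @insert a s ha ih =>
      have hmemins : ∀ t ∈ s, t ∈ insert a s := fun t ht => Finset.mem_insert_of_mem ht
      have hains : a ∈ insert a s := Finset.mem_insert_self a s
      set Sprev := Finset.univ.filter (fun g : G3 n → Bool => ∀ t ∈ s, ¬ Sat g (Vals t))
        with hSprev
      have hfilter : Finset.univ.filter
            (fun g : G3 n → Bool => ∀ t ∈ insert a s, ¬ Sat g (Vals t))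
          = Sprev.filter (fun g => ¬ Sat g (Vals a)) := by
        rw [hSprev, Finset.filter_filter]
        apply Finset.filter_congr
        intro g _
        simp only [Finset.forall_mem_insert]
        tauto
      have hstep := step_count K Sprev (Vals a) (hne a hains) (hcard a hains)
        (h0 a hains) (h1 a hains) ?_
      · have hih := ih (fun t ht => hne t (hmemins t ht)) (fun t ht => hcard t (hmemins t ht))
          (fun t ht => h0 t (hmemins t ht)) (fun t ht => h1 t (hmemins t ht))
          (fun t ht t' ht' htt' => hdisj t (hmemins t ht) t' (hmemins t' ht') htt')
        rw [hfilter, Finset.card_insert_of_notMem ha]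
        calc (Sprev.filter (fun g => ¬ Sat g (Vals a))).card * (2^K)^(s.card + 1)
            = ((Sprev.filter (fun g => ¬ Sat g (Vals a))).card * 2^K) * (2^K)^s.card := by
              ring
          _ ≤ ((2^K - 1) * Sprev.card) * (2^K)^s.card := Nat.mul_le_mul_right _ hstep
          _ = (2^K - 1) * (Sprev.card * (2^K)^s.card) := by ring
          _ ≤ (2^K - 1) * ((2^K - 1)^s.card * 2^(3^n)) := Nat.mul_le_mul_left _ hih
          _ = (2^K - 1)^(s.card + 1) * 2^(3^n) := by ring
      · -- invariance of Sprev under changes on (Vals a).image rep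
        intro g h hagree hg
        rw [hSprev, Finset.mem_filter] at hg ⊢
        refine ⟨Finset.mem_univ _, fun t ht hsat => hg.2 t ht ?_⟩
        intro x hx
        have hrep : rep x ∉ (Vals a).image rep := by
          intro hc
          obtain ⟨y, hy, hys⟩ := Finset.mem_image.mp hc
          have hta : t ≠ a := fun he => ha (he ▸ ht)
          have := hdisj t (hmemins t ht) a hains hta x hx y hy
          rcases rep_eq_imp (hys.symm) with hxy | hxy
          · exact this.1 hxy
          · exact this.2 hxy
        have : memS g x = memS h x := memS_congr (hagree (rep x) hrep)
        rw [this]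
        exact hsat x hx

lemma per_d (k' : ℕ) (hk : k' ≤ n) (d : Fin k' → G3 n) :
    ∃ Fd : Finset (G3 n → Bool),
      (∀ g : G3 n → Bool, g ∉ Fd → (∀ i, d i ≠ 0) →
        ∃ t : G3 n, (t ≠ 0 ∧ memS g t = true) ∧
          ∀ i, d i - t ≠ 0 ∧ memS g (d i - t) = true) ∧
      Fd.card * (2^(k'+1))^((3^(n-k') - 1)/2)
        ≤ (2^(k'+1) - 1)^((3^(n-k') - 1)/2) * 2^(3^n) := by
  classical
  by_cases hd : ∀ i, d i ≠ 0
  swap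
  · exact ⟨∅, fun g _ h => absurd h hd, by simp⟩
  haveI : Fact (Nat.Prime 3) := ⟨by norm_num⟩
  set W := Submodule.span (ZMod 3) (Set.range d) with hW
  have hdW : ∀ i, d i ∈ W := fun i => Submodule.subset_span (Set.mem_range_self i)
  have hWle : Fintype.card W ≤ 3^k' := by
    have hsurj : Function.Surjective
        (fun c : Fin k' → ZMod 3 => (⟨∑ i, c i • d i,
          Submodule.sum_mem _ (fun i _ => Submodule.smul_mem _ _ (hdW i))⟩ : W)) := by
      rintro ⟨x, hx⟩
      obtain ⟨c, hc⟩ := (Submodule.mem_span_range_iff_exists_fun (ZMod 3)).mp hx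
      exact ⟨c, Subtype.ext hc⟩
    calc Fintype.card W ≤ Fintype.card (Fin k' → ZMod 3) :=
          Fintype.card_le_of_surjective _ hsurj
      _ = 3^k' := by rw [Fintype.card_fun]; simp
  obtain ⟨U, hUc⟩ := Submodule.exists_isCompl W
  have hprod : Fintype.card W * Fintype.card U = 3^n := by
    rw [← Fintype.card_prod, Fintype.card_congr (Submodule.prodEquivOfIsCompl W U hUc).toEquiv,
      card_G3]
  have hUge : 3^(n-k') ≤ Fintype.card U := by
    have h1 : 3^(n-k') * 3^k' = 3^n := by
      rw [← pow_add]; congr 1; omega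
    have h2 : 3^(n-k') * 3^k' ≤ Fintype.card U * 3^k' := by
      rw [h1, ← hprod, mul_comm]
      exact Nat.mul_le_mul_left _ hWle
    exact Nat.le_of_mul_le_mul_right h2 (Nat.pow_pos (by norm_num))
  have kill : ∀ x : G3 n, x ∈ W → x ∈ U → x = 0 := fun x hxW hxU =>
    Submodule.disjoint_def.mp hUc.disjoint x hxW hxU
  set sU : Finset (G3 n) := Finset.univ.filter (fun t => t ∈ U) with hsU
  have hsUcard : sU.card = Fintype.card U := (Fintype.card_subtype _).symm
  set s0 : Finset (G3 n) := sU.erase 0 with hs0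
  have hs0card : s0.card = Fintype.card U - 1 := by
    rw [hs0, Finset.card_erase_of_mem, hsUcard]
    rw [hsU]; simp [Submodule.zero_mem]
  set A1 : Finset (G3 n) := s0.filter pos with hA1
  have hA12 : A1.card = (s0.filter (fun t => ¬ pos t)).card := by
    apply Finset.card_bij (fun t _ => -t)
    · intro t ht
      rw [hA1, Finset.mem_filter, hs0, Finset.mem_erase, hsU, Finset.mem_filter] at ht
      obtain ⟨⟨ht0, -, htU⟩, htp⟩ := ht
      rw [Finset.mem_filter, hs0, Finset.mem_erase, hsU, Finset.mem_filter]
      refine ⟨⟨by simpa using ht0, Finset.mem_univ _, U.neg_mem htU⟩, ?_⟩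
      rw [pos_neg ht0]; exact not_not_intro htp
    · intro t1 h1 t2 h2 he
      exact neg_injective he
    · intro t' ht'
      rw [Finset.mem_filter, hs0, Finset.mem_erase, hsU, Finset.mem_filter] at ht'
      obtain ⟨⟨ht0, -, htU⟩, htp⟩ := ht'
      refine ⟨-t', ?_, by simp⟩
      rw [hA1, Finset.mem_filter, hs0, Finset.mem_erase, hsU, Finset.mem_filter]
      refine ⟨⟨by simpa using ht0, Finset.mem_univ _, U.neg_mem htU⟩, ?_⟩
      rw [pos_neg ht0]; exact htp
  have hA : 2 * A1.card + 1 = Fintype.card U := by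
    have hsplit : (s0.filter pos).card + (s0.filter (fun t => ¬ pos t)).card = s0.card :=
      Finset.card_filter_add_card_filter_not _
    have hUpos : 1 ≤ Fintype.card U := Fintype.card_pos
    rw [← hA1] at hsplit
    omega
  set M := (3^(n-k') - 1)/2 with hM
  have hMle : M ≤ A1.card := by omega
  obtain ⟨Sig, hSigsub, hSigcard⟩ := Finset.exists_subset_card_eq hMle
  have hfacts : ∀ t ∈ Sig, t ∈ U ∧ t ≠ 0 ∧ pos t := by
    intro t ht
    have := hSigsub ht
    rw [hA1, Finset.mem_filter, hs0, Finset.mem_erase, hsU, Finset.mem_filter] at this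
    tauto
  set Vals : G3 n → Finset (G3 n) :=
    fun t => insert t (Finset.image (fun i => d i - t) Finset.univ) with hVals
  have hmemVals : ∀ t x, x ∈ Vals t ↔ (x = t ∨ ∃ i, d i - t = x) := by
    intro t x
    rw [hVals]
    simp [Finset.mem_insert, Finset.mem_image]
  have h0 : ∀ t ∈ Sig, ∀ x ∈ Vals t, x ≠ 0 := by
    intro t ht x hx
    obtain ⟨htU, ht0, htp⟩ := hfacts t ht
    rcases (hmemVals t x).mp hx with rfl | ⟨i, rfl⟩
    · exact ht0
    · intro hc
      have : d i = t := by rwa [sub_eq_zero] at hc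
      exact ht0 (kill t (this ▸ hdW i) htU)
  have h1 : ∀ t ∈ Sig, ∀ x ∈ Vals t, ∀ y ∈ Vals t, x ≠ -y := by
    intro t ht x hx y hy
    obtain ⟨htU, ht0, htp⟩ := hfacts t ht
    rcases (hmemVals t x).mp hx with hx' | ⟨i, hi⟩ <;>
      rcases (hmemVals t y).mp hy with hy' | ⟨j, hj⟩
    · rw [hx', hy']
      intro hc
      apply ht0
      apply two_torsion_zero
      nth_rewrite 1 [hc]
      exact neg_add_cancel t
    · rw [hx', ← hj]
      intro hc
      apply hd j
      have hc2 : -(d j - t) = t - d j := by abel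
      rw [hc2] at hc
      have h6 : t - 0 = t - d j := by rw [sub_zero]; exact hc
      exact (sub_right_inj.mp h6).symm
    · rw [← hi, hy']
      intro hc
      apply hd i
      have h6 : d i = (d i - t) + t := by abel
      rw [hc, neg_add_cancel] at h6
      exact h6
    · rw [← hi, ← hj]
      intro hc
      apply ht0
      have hsum : (d i - t) + (d j - t) = 0 := by rw [hc]; exact neg_add_cancel _
      have heq : (d i + d j) - (t + t) = 0 := by rw [← hsum]; abel
      have heq2 : d i + d j = t + t := sub_eq_zero.mp heq
      apply two_torsion_zero
      have hmem : t + t ∈ W := heq2 ▸ W.add_mem (hdW i) (hdW j)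
      exact kill _ hmem (U.add_mem htU htU)
  have hcosT : ∀ t : G3 n, ∀ x ∈ Vals t, x - t ∈ W ∨ x + t ∈ W := by
    intro t x hx
    rcases (hmemVals t x).mp hx with rfl | ⟨i, rfl⟩
    · left; rw [sub_self]; exact W.zero_mem
    · right
      have : d i - t + t = d i := by abel
      rw [this]
      exact hdW i
  have hdisj : ∀ t ∈ Sig, ∀ t' ∈ Sig, t ≠ t' →
      ∀ x ∈ Vals t, ∀ y ∈ Vals t', x ≠ y ∧ x ≠ -y := by
    intro t ht t' ht' htt' x hx y hy
    obtain ⟨htU, ht0, htp⟩ := hfacts t ht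
    obtain ⟨ht'U, ht'0, ht'p⟩ := hfacts t' ht'
    have tsub : t - t' ∉ W := by
      intro hc
      exact htt' (sub_eq_zero.mp (kill _ hc (U.sub_mem htU ht'U)))
    have tadd : t + t' ∉ W := by
      intro hc
      have h8 : t + t' = 0 := kill _ hc (U.add_mem htU ht'U)
      have h9 : t = -t' := eq_neg_of_add_eq_zero_left h8
      have h10 : pos (-t') := h9 ▸ htp
      exact (pos_neg ht'0).mp h10 ht'p
    have combo : ∀ z : G3 n, (z - t ∈ W ∨ z + t ∈ W) →
        (z - t' ∈ W ∨ z + t' ∈ W) → False := by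
      intro z c1 c2
      rcases c1 with c1 | c1 <;> rcases c2 with c2 | c2
      · apply tsub
        have h := W.sub_mem c2 c1
        have e : (z - t') - (z - t) = t - t' := by abel
        rwa [e] at h
      · apply tadd
        have h := W.sub_mem c2 c1
        have e : (z + t') - (z - t) = t + t' := by abel
        rwa [e] at h
      · apply tadd
        have h := W.sub_mem c1 c2
        have e : (z + t) - (z - t') = t + t' := by abel
        rwa [e] at h
      · apply tsub
        have h := W.sub_mem c1 c2
        have e : (z + t) - (z + t') = t - t' := by abel
        rwa [e] at h
    constructor
    · intro hxy
      have c1 := hcosT t x hx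
      rw [hxy] at c1
      exact combo y c1 (hcosT t' y hy)
    · intro hxy
      have c1 := hcosT t x hx
      rw [hxy] at c1
      have c1' : y - t ∈ W ∨ y + t ∈ W := by
        rcases c1 with c1 | c1
        · right
          have h := W.neg_mem c1
          have e : -(-y - t) = y + t := by abel
          rwa [e] at h
        · left
          have h := W.neg_mem c1
          have e : -(-y + t) = y - t := by abel
          rwa [e] at h
      exact combo y c1' (hcosT t' y hy)
  have hneV : ∀ t ∈ Sig, (Vals t).Nonempty := fun t _ => ⟨t, Finset.mem_insert_self _ _⟩
  have hcardV : ∀ t ∈ Sig, (Vals t).card ≤ k' + 1 := by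
    intro t _
    have h5 := Finset.card_insert_le t (Finset.image (fun i => d i - t) Finset.univ)
    have h6 := Finset.card_image_le (s := (Finset.univ : Finset (Fin k')))
      (f := fun i => d i - t)
    simp only [Finset.card_univ, Fintype.card_fin] at h6
    have h7 : (Vals t).card
        = (insert t (Finset.image (fun i => d i - t) Finset.univ)).card := rfl
    rw [h7]
    omega
  have hchain := chain_count (k'+1) Vals Sig hneV hcardV h0 h1 hdisj
  refine ⟨Finset.univ.filter (fun g => ∀ t ∈ Sig, ¬ Sat g (Vals t)), ?_, ?_⟩
  · intro g hg _
    have hnot : ¬ ∀ t ∈ Sig, ¬ Sat g (Vals t) := fun hall =>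
      hg (Finset.mem_filter.mpr ⟨Finset.mem_univ _, hall⟩)
    push_neg at hnot
    obtain ⟨t, ht, hSat⟩ := hnot
    obtain ⟨htU, ht0, htp⟩ := hfacts t ht
    refine ⟨t, ⟨ht0, hSat t ((hmemVals t t).mpr (Or.inl rfl))⟩, fun i => ?_⟩
    have hxV : d i - t ∈ Vals t := (hmemVals t (d i - t)).mpr (Or.inr ⟨i, rfl⟩)
    exact ⟨h0 t ht _ hxV, hSat _ hxV⟩
  · rw [← hSigcard]
    exact hchain

lemma exists_good (k' : ℕ) (hk : k' ≤ n)
    (hnum : (3^n)^k' * (2^(k'+1) - 1)^((3^(n-k') - 1)/2)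
      < (2^(k'+1))^((3^(n-k') - 1)/2)) :
    ∃ g : G3 n → Bool, ∀ d : Fin k' → G3 n, (∀ i, d i ≠ 0) →
      ∃ t : G3 n, (t ≠ 0 ∧ memS g t = true) ∧
        ∀ i, d i - t ≠ 0 ∧ memS g (d i - t) = true := by
  classical
  choose F hF1 hF2 using per_d k' hk
  set M := (3^(n-k') - 1)/2 with hM
  set B := 2^(k'+1) with hB
  set C := 2^(k'+1) - 1 with hC
  set Bad := Finset.univ.biUnion (fun d : Fin k' → G3 n => F d) with hBad
  have hsum : Bad.card ≤ ∑ d : Fin k' → G3 n, (F d).card := Finset.card_biUnion_le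
  have hcardtup : (Finset.univ : Finset (Fin k' → G3 n)).card = (3^n)^k' := by
    rw [Finset.card_univ, Fintype.card_fun, card_G3]
    simp
  have htot : Bad.card * B^M ≤ (3^n)^k' * (C^M * 2^(3^n)) := by
    calc Bad.card * B^M ≤ (∑ d : Fin k' → G3 n, (F d).card) * B^M :=
          Nat.mul_le_mul_right _ hsum
      _ = ∑ d : Fin k' → G3 n, (F d).card * B^M := by rw [Finset.sum_mul]
      _ ≤ ∑ d : Fin k' → G3 n, C^M * 2^(3^n) := Finset.sum_le_sum (fun d _ => hF2 d)
      _ = (3^n)^k' * (C^M * 2^(3^n)) := by rw [Finset.sum_const, hcardtup, smul_eq_mul]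
  have hlt : Bad.card * B^M < 2^(3^n) * B^M := by
    calc Bad.card * B^M ≤ (3^n)^k' * (C^M * 2^(3^n)) := htot
      _ = ((3^n)^k' * C^M) * 2^(3^n) := by ring
      _ < B^M * 2^(3^n) := by
          exact (Nat.mul_lt_mul_right (Nat.pow_pos (by norm_num))).mpr hnum
      _ = 2^(3^n) * B^M := by ring
  have hcard : Bad.card < 2^(3^n) :=
    Nat.lt_of_mul_lt_mul_right hlt
  have hex : ∃ g : G3 n → Bool, g ∉ Bad := by
    by_contra hc
    push_neg at hc
    have hsub : (Finset.univ : Finset (G3 n → Bool)) ⊆ Bad := fun g _ => hc g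
    have := Finset.card_le_card hsub
    rw [card_univ_bool] at this
    omega
  obtain ⟨g, hg⟩ := hex
  refine ⟨g, fun d hd => hF1 d g (fun hmem => ?_) hd⟩
  exact hg (Finset.mem_biUnion.mpr ⟨d, Finset.mem_univ _, hmem⟩)

/-- For every `k` there is a finite tournament whose arc set is partitioned
into directed 3-cycles (a Steiner triple graph) and whose cop number is at
least `k`. -/
theorem stmt_3 (k : ℕ) :
    ∃ (V : Type) (_ : Fintype V) (A : V → V → Prop),
      IsTournament A ∧
      (∃ P : Set (Set (V × V)),
        (∀ s ∈ P, IsCyclicTriple A s) ∧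
        (∀ u v : V, A u v → ∃! s, s ∈ P ∧ (u, v) ∈ s)) ∧
      k ≤ copNumber A := by
  classical
  set k' := k - 1 with hk'
  obtain ⟨n, hkn, hn1, hnum⟩ := numeric k'
  obtain ⟨g, hgood⟩ := exists_good (n := n) k' hkn hnum
  refine ⟨G3 n, inferInstance, Arc g, arc_tournament g, triple_partition g, ?_⟩
  rcases Nat.eq_zero_or_pos k with rfl | hkpos
  · exact Nat.zero_le _
  have hirr : ∀ v : G3 n, ¬ Arc g v v := (arc_tournament g).1
  have hasym : ∀ u v : G3 n, Arc g u v → ¬ Arc g v u := by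
    intro u v huv hvu
    by_cases he : u = v
    · exact hirr u (he ▸ huv)
    · exact (((arc_tournament g).2 u v he).mp huv) hvu
  have hcard3 : Fintype.card (G3 n) = 3^n := card_G3
  have hk3 : k ≤ 3^n := by
    have h1 : n < 3^n := Nat.lt_pow_self (by norm_num)
    omega
  apply copNumber_ge hirr hasym
  · intro j hj r w hw
    have hjk' : j ≤ k' := by omega
    have hnontriv : Nontrivial (G3 n) := by
      apply Fintype.one_lt_card_iff_nontrivial.mp
      rw [hcard3]
      calc 1 < 3^1 := by norm_num
        _ ≤ 3^n := Nat.pow_le_pow_right (by norm_num) hn1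
    obtain ⟨e, he⟩ := exists_ne (0 : G3 n)
    set d : Fin k' → G3 n := fun i => if h : (i : ℕ) < j then w ⟨i, h⟩ - r else e with hdd
    have hd : ∀ i, d i ≠ 0 := by
      intro i
      show (if h : (i : ℕ) < j then w ⟨(i : ℕ), h⟩ - r else e) ≠ 0
      by_cases h : (i : ℕ) < j
      · rw [dif_pos h]; exact sub_ne_zero_of_ne (hw _)
      · rw [dif_neg h]; exact he
    obtain ⟨t, ⟨ht0, htS⟩, hdt⟩ := hgood d hd
    refine ⟨r + t, Or.inr ?_, ?_⟩
    · show (r + t) - r ∈ Sg g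
      rw [add_sub_cancel_left]
      exact ⟨ht0, htS⟩
    · intro i
      have hi : (i : ℕ) < k' := lt_of_lt_of_le i.isLt hjk'
      have hval : d ⟨(i : ℕ), hi⟩ = w i - r := by
        show (if h : (i : ℕ) < j then w ⟨(i : ℕ), h⟩ - r else e) = w i - r
        rw [dif_pos i.isLt]
      have hd_i := hdt ⟨(i : ℕ), hi⟩
      rw [hval] at hd_i
      show Arc g (r + t) (w i)
      have hrw : w i - (r + t) = (w i - r) - t := by abel
      rw [Arc, hrw]
      exact ⟨hd_i.1, hd_i.2⟩
  · intro j hj c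
    by_contra hc
    push_neg at hc
    have hsurj : Function.Surjective c := fun r => by
      obtain ⟨i, hi⟩ := hc r
      exact ⟨i, hi⟩
    have hle := Fintype.card_le_of_surjective c hsurj
    rw [hcard3, Fintype.card_fin] at hle
    omega


end CopsRobbers
end

section
/- There exists a cop-win oriented graph D such that in every play of the game in which both players play optimally — the cop following a strategyminimizing the worst-case number of rounds until capture and the robber following a strategy maximizing the number of rounds until capture — there are two consecutive rounds between which the directed distance from the cop's position to the robber's position strictly increases. -/
open Classical

universe u

namespace CopsRobbers

variable {V : Type u}

/-- A legal move in the game: stay put or move along an out-arc. -/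
def Legal (A : V → V → Prop) (u v : V) : Prop := v = u ∨ A u v

/-- The value of the position (one cop at `c`, robber at `r`, cop to move):
the least number of further rounds within which the cop can force capture
(`⊤` if she cannot). -/
noncomputable def copValue (A : V → V → Prop) (c r : V) : ℕ∞ :=
  sInf {n : ℕ∞ | ∃ m : ℕ, (m : ℕ∞) = n ∧ CatchIn A 1 m (fun _ => c) r}

/-- The value, for the cop, of moving to `c'` when the robber stands at `r`:
`0` if this captures the robber, and otherwise the worst-case value over all
of the robber's legal replies. -/
noncomputable def copMoveVal (A : V → V → Prop) (r c' : V) : ℕ∞ :=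
  if c' = r then 0 else ⨆ r' ∈ {x : V | Legal A r x}, copValue A c' r'

/-- The robber has not been caught during rounds `0, …, t`: after no cop move
and after no robber move up to time `t` do the two players share a vertex.
(Here `cop s` and `rob s` are the positions after round `s`; in round `s ≥ 1`
the cop moves first, so she captures at round `s` if `cop s = rob (s - 1)` or
`cop s = rob s`.) -/
def NotCaughtBy (cop rob : ℕ → V) (t : ℕ) : Prop :=
  ∀ s ≤ t, cop s ≠ rob s ∧ (1 ≤ s → cop s ≠ rob (s - 1))

/-- Both players play optimally in the play `(cop, rob)` (for one cop): the cop
chooses her start and each of her moves to minimize the worst-case number of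
remaining rounds until capture, and the robber chooses his start and each of
his moves to maximize the number of rounds until capture, all moves being
legal while the game is in progress. -/
structure OptimalPlay (A : V → V → Prop) (cop rob : ℕ → V) : Prop where
  copInit : ∀ v : V, (⨆ r : V, copValue A (cop 0) r) ≤ ⨆ r : V, copValue A v r
  robInit : ∀ r : V, copValue A (cop 0) r ≤ copValue A (cop 0) (rob 0)
  copLegal : ∀ t : ℕ, NotCaughtBy cop rob t → Legal A (cop t) (cop (t + 1))
  copOpt : ∀ t : ℕ, NotCaughtBy cop rob t → ∀ c' : V, Legal A (cop t) c' →
    copMoveVal A (rob t) (cop (t + 1)) ≤ copMoveVal A (rob t) c'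
  robLegal : ∀ t : ℕ, NotCaughtBy cop rob t → cop (t + 1) ≠ rob t →
    Legal A (rob t) (rob (t + 1))
  robOpt : ∀ t : ℕ, NotCaughtBy cop rob t → cop (t + 1) ≠ rob t →
    ∀ r' : V, Legal A (rob t) r' →
      copValue A (cop (t + 1)) r' ≤ copValue A (cop (t + 1)) (rob (t + 1))

/-- `ReachIn A m u v`: there is a directed walk of length `m` from `u` to `v`. -/
def ReachIn (A : V → V → Prop) : ℕ → V → V → Prop
  | 0, u, v => u = v
  | m + 1, u, w => ∃ v, A u v ∧ ReachIn A m v w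

/-- Directed distance: the length of a shortest directed path from `u` to `v`
(`⊤` if there is none). -/
noncomputable def dDist (A : V → V → Prop) (u v : V) : ℕ∞ :=
  sInf {n : ℕ∞ | ∃ m : ℕ, (m : ℕ∞) = n ∧ ReachIn A m u v}

/- ===== auxiliary development for stmt_13 ===== -/

/-- The arc relation of our concrete oriented graph on 8 vertices. -/
def A8 : Fin 8 → Fin 8 → Prop := fun u v =>
  (u.val, v.val) ∈ [(0,2),(0,3),(0,4),(0,5),(0,6),(1,2),(1,6),(2,4),(2,6),
                    (3,5),(3,7),(4,6),(5,1),(5,6),(6,3),(7,4)]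

instance A8dec : ∀ u v : Fin 8, Decidable (A8 u v) := fun u v => by
  unfold A8; infer_instance

instance legalDec : ∀ u v : Fin 8, Decidable (Legal A8 u v) := fun u v => by
  unfold Legal; infer_instance

/-- One-cop catch-within-`m` predicate, as an explicit recursion. -/
def fP (A : V → V → Prop) : ℕ → V → V → Prop
  | 0, c, r => c = r
  | m + 1, c, r => c = r ∨ ∃ c', (c' = c ∨ A c c') ∧
      (c' = r ∨ ∀ r', (r' = r ∨ A r r') → fP A m c' r')

instance fPdec : ∀ (m : ℕ) (c r : Fin 8), Decidable (fP A8 m c r)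
  | 0, c, r => by unfold fP; infer_instance
  | m + 1, c, r => by
      have : ∀ c' r', Decidable (fP A8 m c' r') := fPdec m
      unfold fP; exact inferInstance

theorem fP_rfl {A : V → V → Prop} {c r : V} (h : c = r) : ∀ m, fP A m c r := by
  intro m; cases m with
  | zero => exact h
  | succ m => exact Or.inl h

theorem catch_of_fP {A : V → V → Prop} :
    ∀ {m : ℕ} {c r : V}, fP A m c r → CatchIn A 1 m (fun _ => c) r := by
  intro m
  induction m with
  | zero => intro c r h; exact CatchIn.caught ⟨0, h⟩
  | succ m ih =>
      rintro c r (h | ⟨c', hc, h⟩)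
      · exact CatchIn.caught ⟨0, h⟩
      · have hc' : ∀ i : Fin 1, (fun _ => c') i = (fun _ => c) i ∨
            A ((fun _ => c) i) ((fun _ => c') i) := fun _ => hc
        rcases h with h | h
        · exact CatchIn.stepCatch (fun _ => c') hc' ⟨0, h⟩
        · exact CatchIn.step (fun _ => c') hc' (fun r' hr' => ih (h r' hr'))

theorem fP_of_catch {A : V → V → Prop} {m : ℕ} {cf : Fin 1 → V} {r : V}
    (h : CatchIn A 1 m cf r) : fP A m (cf 0) r := by
  induction h with
  | @caught t c r h =>
      rcases h with ⟨i, hi⟩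
      have : i = 0 := Subsingleton.elim _ _
      exact fP_rfl (this ▸ hi) t
  | @stepCatch t c r c' hc h =>
      rcases h with ⟨i, hi⟩
      have : i = 0 := Subsingleton.elim _ _
      exact Or.inr ⟨c' 0, hc 0, Or.inl (this ▸ hi)⟩
  | @step t c r c' hc h ih =>
      exact Or.inr ⟨c' 0, hc 0, Or.inr fun r' hr' => ih r' hr'⟩

theorem fP_succ {A : V → V → Prop} : ∀ {m : ℕ} {c r : V}, fP A m c r → fP A (m + 1) c r := by
  intro m
  induction m with
  | zero => intro c r h; exact Or.inl h
  | succ m ih =>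
      rintro c r (h | ⟨c', hc, h | h⟩)
      · exact Or.inl h
      · exact Or.inr ⟨c', hc, Or.inl h⟩
      · exact Or.inr ⟨c', hc, Or.inr fun r' hr' => ih (h r' hr')⟩

theorem fP_mono {A : V → V → Prop} {m k : ℕ} (hmk : m ≤ k) {c r : V}
    (h : fP A m c r) : fP A k c r := by
  induction k with
  | zero => exact (Nat.le_zero.mp hmk) ▸ h
  | succ k ih =>
      rcases Nat.lt_or_ge m (k+1) with hlt | hge
      · exact fP_succ (ih (Nat.lt_succ_iff.mp hlt))
      · exact (Nat.le_antisymm hmk hge) ▸ h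

theorem fP_stab {A : V → V → Prop} {k : ℕ}
    (hk : ∀ c r : V, fP A (k + 1) c r → fP A k c r) :
    ∀ (j : ℕ) (c r : V), fP A (k + j) c r → fP A k c r := by
  intro j
  induction j with
  | zero => exact fun c r h => h
  | succ j ih =>
      intro c r h
      have h' : fP A ((k + j) + 1) c r := h
      rcases h' with h' | ⟨c', hc, h' | h'⟩
      · exact fP_rfl h' k
      · exact hk c r (Or.inr ⟨c', hc, Or.inl h'⟩)
      · exact hk c r (Or.inr ⟨c', hc, Or.inr fun r' hr' => ih c' r' (h' r' hr')⟩)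

theorem copValue_le {A : V → V → Prop} {c r : V} {m : ℕ} (h : fP A m c r) :
    copValue A c r ≤ (m : ℕ∞) :=
  sInf_le ⟨m, rfl, catch_of_fP h⟩

theorem copValue_ge {A : V → V → Prop} {c r : V} {m : ℕ}
    (h : ∀ j : ℕ, j < m → ¬ fP A j c r) : (m : ℕ∞) ≤ copValue A c r := by
  refine le_sInf ?_
  rintro b ⟨j, rfl, hj⟩
  have hf : fP A j c r := fP_of_catch hj
  have : m ≤ j := not_lt.1 fun hlt => h j hlt hf
  exact_mod_cast this

theorem copValue_self {A : V → V → Prop} (c : V) : copValue A c c = 0 := by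
  have h := copValue_le (A := A) (c := c) (r := c) (m := 0) rfl
  simpa using h

theorem copValue_eq {A : V → V → Prop} {c r : V} {m : ℕ}
    (h1 : fP A (m + 1) c r) (h2 : ¬ fP A m c r) :
    copValue A c r = ((m + 1 : ℕ) : ℕ∞) :=
  le_antisymm (copValue_le h1)
    (copValue_ge fun j hj hf => h2 (fP_mono (Nat.lt_succ_iff.mp hj) hf))

theorem copValue_top {A : V → V → Prop} {k : ℕ}
    (hst : ∀ c r : V, fP A (k + 1) c r → fP A k c r) {c r : V}
    (h : ¬ fP A k c r) : copValue A c r = ⊤ := by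
  rw [copValue, sInf_eq_top]
  rintro b ⟨j, rfl, hj⟩
  exfalso
  have hf : fP A j c r := fP_of_catch hj
  rcases le_or_gt j k with hle | hlt
  · exact h (fP_mono hle hf)
  · have : fP A (k + (j - k)) c r := by rwa [Nat.add_sub_cancel' hlt.le]
    exact h (fP_stab hst _ _ _ this)

theorem no_catch_zero {A : V → V → Prop} {t : ℕ} {c : Fin 0 → V} {r : V} :
    ¬ CatchIn A 0 t c r := by
  intro h
  induction h with
  | caught h => exact h.choose.elim0
  | stepCatch c' hc h => exact h.choose.elim0
  | @step t c r c' hc h ih => exact ih r (Or.inl rfl)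

/-- Value table of the game on `A8` (`99` encodes `⊤`). -/
def valT : Fin 8 → Fin 8 → ℕ := fun c r =>
  (([[0,4,1,1,1,1,1,5],
     [99,0,1,99,2,99,1,99],
     [99,99,0,99,1,99,1,99],
     [99,4,4,0,4,1,99,1],
     [99,99,99,99,0,99,1,99],
     [99,1,3,99,3,0,1,99],
     [99,99,99,1,99,99,0,5],
     [99,99,99,99,1,99,99,0]] : List (List ℕ)).getD c.val []).getD r.val 99

def gb (m : ℕ) (c r : Fin 8) : Prop := valT c r ≤ m

instance : ∀ (m : ℕ) (c r : Fin 8), Decidable (gb m c r) := fun m c r => by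
  unfold gb; infer_instance

theorem fP_step_iff {A : V → V → Prop} {m : ℕ} {P Q : V → V → Prop}
    (hP : ∀ c r, fP A m c r ↔ P c r)
    (hQ : ∀ c r, Q c r ↔ (c = r ∨ ∃ c', (c' = c ∨ A c c') ∧
      (c' = r ∨ ∀ r', (r' = r ∨ A r r') → P c' r'))) :
    ∀ c r, fP A (m + 1) c r ↔ Q c r := by
  intro c r
  rw [hQ c r]
  show (c = r ∨ ∃ c', (c' = c ∨ A c c') ∧
      (c' = r ∨ ∀ r', (r' = r ∨ A r r') → fP A m c' r')) ↔ _
  simp only [hP]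

theorem tbl0 : ∀ c r, fP A8 0 c r ↔ gb 0 c r := by decide
theorem tbl1 : ∀ c r, fP A8 1 c r ↔ gb 1 c r := fP_step_iff tbl0 (by decide)
theorem tbl2 : ∀ c r, fP A8 2 c r ↔ gb 2 c r := fP_step_iff tbl1 (by decide)
theorem tbl3 : ∀ c r, fP A8 3 c r ↔ gb 3 c r := fP_step_iff tbl2 (by decide)
theorem tbl4 : ∀ c r, fP A8 4 c r ↔ gb 4 c r := fP_step_iff tbl3 (by decide)
theorem tbl5 : ∀ c r, fP A8 5 c r ↔ gb 5 c r := fP_step_iff tbl4 (by decide)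
theorem tbl6 : ∀ c r, fP A8 6 c r ↔ gb 6 c r := fP_step_iff tbl5 (by decide)

theorem hstab : ∀ c r : Fin 8, fP A8 (5 + 1) c r → fP A8 5 c r := fun c r h =>
  (tbl5 c r).mpr ((by decide : ∀ c r, gb 6 c r → gb 5 c r) c r ((tbl6 c r).mp h))

theorem cvTop {c r : Fin 8} (h : ¬ gb 5 c r) : copValue A8 c r = ⊤ :=
  copValue_top hstab (fun h' => h ((tbl5 c r).mp h'))

theorem cv1 {c r : Fin 8} (h1 : gb 1 c r) (h2 : ¬ gb 0 c r) :
    copValue A8 c r = ((1 : ℕ) : ℕ∞) :=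
  copValue_eq ((tbl1 c r).mpr h1) (fun h => h2 ((tbl0 c r).mp h))

theorem cv3 {c r : Fin 8} (h1 : gb 3 c r) (h2 : ¬ gb 2 c r) :
    copValue A8 c r = ((3 : ℕ) : ℕ∞) :=
  copValue_eq ((tbl3 c r).mpr h1) (fun h => h2 ((tbl2 c r).mp h))

theorem cv4 {c r : Fin 8} (h1 : gb 4 c r) (h2 : ¬ gb 3 c r) :
    copValue A8 c r = ((4 : ℕ) : ℕ∞) :=
  copValue_eq ((tbl4 c r).mpr h1) (fun h => h2 ((tbl3 c r).mp h))

theorem cv5 {c r : Fin 8} (h1 : gb 5 c r) (h2 : ¬ gb 4 c r) :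
    copValue A8 c r = ((5 : ℕ) : ℕ∞) :=
  copValue_eq ((tbl5 c r).mpr h1) (fun h => h2 ((tbl4 c r).mp h))


instance reachDec : ∀ (m : ℕ) (u v : Fin 8), Decidable (ReachIn A8 m u v)
  | 0, u, v => by unfold ReachIn; infer_instance
  | m + 1, u, v => by
      have : ∀ u' v', Decidable (ReachIn A8 m u' v') := reachDec m
      unfold ReachIn; exact inferInstance

theorem dDist_eq {A : V → V → Prop} {u v : V} {m : ℕ}
    (h1 : ReachIn A m u v) (h2 : ∀ j, j < m → ¬ ReachIn A j u v) :
    dDist A u v = (m : ℕ∞) := by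
  refine le_antisymm (sInf_le ⟨m, rfl, h1⟩) (le_sInf ?_)
  rintro b ⟨j, rfl, hj⟩
  exact_mod_cast not_lt.1 fun hlt => h2 j hlt hj

theorem v07 : copValue A8 0 7 = ((5:ℕ) : ℕ∞) := cv5 (by decide) (by decide)
theorem v37 : copValue A8 3 7 = ((1:ℕ) : ℕ∞) := cv1 (by decide) (by decide)
theorem v34 : copValue A8 3 4 = ((4:ℕ) : ℕ∞) := cv4 (by decide) (by decide)
theorem v67 : copValue A8 6 7 = ((5:ℕ) : ℕ∞) := cv5 (by decide) (by decide)
theorem v54 : copValue A8 5 4 = ((3:ℕ) : ℕ∞) := cv3 (by decide) (by decide)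
theorem v56 : copValue A8 5 6 = ((1:ℕ) : ℕ∞) := cv1 (by decide) (by decide)
theorem v27 : copValue A8 2 7 = ⊤ := cvTop (by decide)
theorem v47 : copValue A8 4 7 = ⊤ := cvTop (by decide)
theorem v57 : copValue A8 5 7 = ⊤ := cvTop (by decide)
theorem v36 : copValue A8 3 6 = ⊤ := cvTop (by decide)
theorem v76 : copValue A8 7 6 = ⊤ := cvTop (by decide)

theorem d34 : dDist A8 3 4 = ((2:ℕ) : ℕ∞) := dDist_eq (by decide) (by decide)
theorem d54 : dDist A8 5 4 = ((3:ℕ) : ℕ∞) := dDist_eq (by decide) (by decide)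

theorem out0 : ∀ x : Fin 8, Legal A8 0 x →
    x = 0 ∨ x = 2 ∨ x = 3 ∨ x = 4 ∨ x = 5 ∨ x = 6 := by decide
theorem out3 : ∀ x : Fin 8, Legal A8 3 x → x = 3 ∨ x = 5 ∨ x = 7 := by decide
theorem out7 : ∀ x : Fin 8, Legal A8 7 x → x = 7 ∨ x = 4 := by decide
theorem out4 : ∀ x : Fin 8, Legal A8 4 x → x = 4 ∨ x = 6 := by decide

theorem mv_lb {r c' w : Fin 8} (hw : Legal A8 r w) (hne : c' ≠ r) :
    copValue A8 c' w ≤ copMoveVal A8 r c' := by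
  unfold copMoveVal
  rw [if_neg hne]
  exact le_biSup (fun x => copValue A8 c' x) hw

theorem mv_gt_of_top {r c' w : Fin 8} (hw : Legal A8 r w) (hne : c' ≠ r)
    (hv : copValue A8 c' w = ⊤) {b : ℕ}
    (hle : copMoveVal A8 r c' ≤ (b : ℕ∞)) : False := by
  have h1 := mv_lb hw hne
  rw [hv] at h1
  have h2 := h1.trans hle
  simp at h2

theorem mv_gt_of_val {r c' w : Fin 8} (hw : Legal A8 r w) (hne : c' ≠ r)
    {a b : ℕ} (hv : copValue A8 c' w = (a : ℕ∞)) (hab : b < a)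
    (hle : copMoveVal A8 r c' ≤ (b : ℕ∞)) : False := by
  have h1 := mv_lb hw hne
  rw [hv] at h1
  exact absurd (Nat.cast_le.mp (h1.trans hle)) (by omega)

theorem mv734 : copMoveVal A8 7 3 ≤ ((4:ℕ) : ℕ∞) := by
  unfold copMoveVal
  rw [if_neg (by decide : (3 : Fin 8) ≠ 7)]
  refine iSup₂_le ?_
  intro r' hr'
  rcases out7 r' hr' with h | h <;> subst h
  · rw [v37]; exact Nat.cast_le.mpr (by omega)
  · rw [v34]

theorem mv445 : copMoveVal A8 4 5 ≤ ((3:ℕ) : ℕ∞) := by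
  unfold copMoveVal
  rw [if_neg (by decide : (5 : Fin 8) ≠ 4)]
  refine iSup₂_le ?_
  intro r' hr'
  rcases out4 r' hr' with h | h <;> subst h
  · rw [v54]
  · rw [v56]; exact Nat.cast_le.mpr (by omega)

theorem row0 : ∀ r : Fin 8, gb 5 0 r := by decide


/-- There is a cop-win oriented graph on which, in every optimal play, the
directed distance from the cop to the robber strictly increases between two
consecutive rounds. -/
theorem stmt_13 :
    ∃ (V : Type) (_ : Fintype V) (A : V → V → Prop),
      IsOriented A ∧ copNumber A = 1 ∧
      ∀ cop rob : ℕ → V, OptimalPlay A cop rob →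
        ∃ t : ℕ, NotCaughtBy cop rob (t + 1) ∧
          dDist A (cop t) (rob t) < dDist A (cop (t + 1)) (rob (t + 1)) := by
  refine ⟨Fin 8, inferInstance, A8, by unfold IsOriented; decide, ?_, ?_⟩
  · -- copNumber A8 = 1
    have hwin : CopsWin A8 1 :=
      ⟨5, fun _ => 0, fun r => catch_of_fP ((tbl5 0 r).mpr (row0 r))⟩
    have h0 : (0 : ℕ) ∉ {k | CopsWin A8 k} := by
      rintro ⟨t, c, h⟩
      exact no_catch_zero (h 0)
    have hle : sInf {k | CopsWin A8 k} ≤ 1 := Nat.sInf_le hwin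
    have hmem : sInf {k | CopsWin A8 k} ∈ {k | CopsWin A8 k} :=
      Nat.sInf_mem ⟨1, hwin⟩
    have hne : sInf {k | CopsWin A8 k} ≠ 0 := fun h => h0 (h ▸ hmem)
    rw [copNumber]
    omega
  · intro cop rob hp
    -- round 0 : cop starts at 0
    have hc0 : cop 0 = 0 := by
      by_contra h
      have htop : copValue A8 (cop 0) 0 = ⊤ :=
        cvTop ((by decide : ∀ v : Fin 8, v ≠ 0 → ¬ gb 5 v 0) _ h)
      have h5 := hp.copInit 0
      have hub : (⨆ r, copValue A8 (0 : Fin 8) r) ≤ ((5:ℕ) : ℕ∞) :=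
        iSup_le fun r => copValue_le ((tbl5 0 r).mpr (row0 r))
      have hlb := le_iSup (fun r => copValue A8 (cop 0) r) 0
      rw [htop] at hlb
      have hbad := (hlb.trans (h5.trans hub))
      simp at hbad
    -- robber starts at 7
    have hr0 : rob 0 = 7 := by
      by_contra h
      have h1 := hp.robInit 7
      rw [hc0, v07] at h1
      have h2 : copValue A8 0 (rob 0) ≤ ((4:ℕ) : ℕ∞) :=
        copValue_le ((tbl4 0 (rob 0)).mpr
          ((by decide : ∀ r : Fin 8, r ≠ 7 → gb 4 0 r) _ h))
      exact absurd (Nat.cast_le.mp (h1.trans h2)) (by omega)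
    have hN0 : NotCaughtBy cop rob 0 := by
      intro s hs
      have hs0 : s = 0 := Nat.le_zero.mp hs
      subst hs0
      exact ⟨by rw [hc0, hr0]; decide, fun h => absurd h (by omega)⟩
    -- round 1 : cop moves to 3
    have hc1 : cop 1 = 3 := by
      have hleg := hp.copLegal 0 hN0
      rw [hc0] at hleg
      have hopt := hp.copOpt 0 hN0 3 (by rw [hc0]; exact Or.inr (by decide))
      rw [hr0] at hopt
      have hopt4 : copMoveVal A8 7 (cop 1) ≤ ((4:ℕ) : ℕ∞) := hopt.trans mv734
      rcases out0 _ hleg with h | h | h | h | h | h <;> rw [h] at hopt4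
      · exact (mv_gt_of_val (Or.inl rfl) (by decide) v07 (by omega) hopt4).elim
      · exact (mv_gt_of_top (Or.inl rfl) (by decide) v27 hopt4).elim
      · exact h
      · exact (mv_gt_of_top (Or.inl rfl) (by decide) v47 hopt4).elim
      · exact (mv_gt_of_top (Or.inl rfl) (by decide) v57 hopt4).elim
      · exact (mv_gt_of_val (Or.inl rfl) (by decide) v67 (by omega) hopt4).elim
    -- robber moves to 4
    have hne13 : cop 1 ≠ rob 0 := by rw [hc1, hr0]; decide
    have hr1 : rob 1 = 4 := by
      have hleg := hp.robLegal 0 hN0 hne13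
      rw [hr0] at hleg
      have hopt := hp.robOpt 0 hN0 hne13 4 (by rw [hr0]; exact Or.inr (by decide))
      rw [hc1, v34] at hopt
      rcases out7 _ hleg with h | h
      · exfalso
        rw [h, v37] at hopt
        exact absurd (Nat.cast_le.mp hopt) (by omega)
      · exact h
    have hN1 : NotCaughtBy cop rob 1 := by
      intro s hs
      interval_cases s
      · exact ⟨by rw [hc0, hr0]; decide, fun h => absurd h (by omega)⟩
      · exact ⟨by rw [hc1, hr1]; decide, fun _ => by rw [hc1, hr0]; decide⟩
    -- round 2 : cop moves to 5
    have hc2 : cop 2 = 5 := by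
      have hleg := hp.copLegal 1 hN1
      rw [hc1] at hleg
      have hopt := hp.copOpt 1 hN1 5 (by rw [hc1]; exact Or.inr (by decide))
      rw [hr1] at hopt
      have hopt3 : copMoveVal A8 4 (cop 2) ≤ ((3:ℕ) : ℕ∞) := hopt.trans mv445
      rcases out3 _ hleg with h | h | h <;> rw [h] at hopt3
      · exact (mv_gt_of_top (Or.inr (by decide : A8 4 6)) (by decide) v36 hopt3).elim
      · exact h
      · exact (mv_gt_of_top (Or.inr (by decide : A8 4 6)) (by decide) v76 hopt3).elim
    -- robber stays at 4
    have hne25 : cop 2 ≠ rob 1 := by rw [hc2, hr1]; decide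
    have hr2 : rob 2 = 4 := by
      have hleg := hp.robLegal 1 hN1 hne25
      rw [hr1] at hleg
      have hopt := hp.robOpt 1 hN1 hne25 4 (by rw [hr1]; exact Or.inl rfl)
      rw [hc2, v54] at hopt
      rcases out4 _ hleg with h | h
      · exact h
      · exfalso
        rw [h, v56] at hopt
        exact absurd (Nat.cast_le.mp hopt) (by omega)
    have hN2 : NotCaughtBy cop rob 2 := by
      intro s hs
      interval_cases s
      · exact ⟨by rw [hc0, hr0]; decide, fun h => absurd h (by omega)⟩
      · exact ⟨by rw [hc1, hr1]; decide, fun _ => by rw [hc1, hr0]; decide⟩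
      · exact ⟨by rw [hc2, hr2]; decide, fun _ => by rw [hc2, hr1]; decide⟩
    refine ⟨1, hN2, ?_⟩
    rw [hc1, hr1, hc2, hr2, d34, d54]
    exact Nat.cast_lt.mpr (by omega)

end CopsRobbers
end

section
/- There exists a cop-win oriented graph D such that in every play of the game in which both players play optimally, the cop must revisit some vertex: at some point in the game the cop occupies a vertex that she previously occupied and had since left. -/
open Classical

universe u

namespace CopsRobbers

variable {V : Type u}

namespace Ex14

def arcs : List (ℕ × ℕ) :=
  [(0,2),(0,7),(1,5),(1,6),(2,4),(3,0),(3,1),(3,2),(3,4),(3,5),(3,7),(4,6),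
   (5,0),(5,4),(5,6),(6,0),(6,2),(7,1),(7,6)]

def A (u v : Fin 8) : Prop := ((u : ℕ), (v : ℕ)) ∈ arcs

instance : DecidableRel A := fun u v => inferInstanceAs (Decidable (_ ∈ _))

instance (u v : Fin 8) : Decidable (Legal A u v) :=
  inferInstanceAs (Decidable (v = u ∨ A u v))

def phiT : List (List ℕ) :=
  [[0,1000,1,1000,4,1000,1000,1],
   [1000,0,6,1000,2,1,1,1000],
   [1000,1000,0,1000,1,1000,1000,1000],
   [1,1,1,0,1,1,6,1],
   [1000,1000,1000,1000,0,1000,1,1000],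
   [1,1000,5,1000,1,0,1,1000],
   [1,1000,1,1000,1000,1000,0,1000],
   [1000,1,7,1000,3,1000,1,0]]

def phi (c r : Fin 8) : ℕ := (phiT.getD c.val []).getD r.val 0

lemma inv0 : ∀ c r : Fin 8, phi c r = 0 → c = r := by decide

lemma inv1 : ∀ c r : Fin 8, 1 ≤ phi c r → c ≠ r := by decide

lemma inv_up : ∀ c r : Fin 8, 1 ≤ phi c r → phi c r ≤ 999 →
    ∃ c', Legal A c c' ∧ (c' = r ∨ ∀ r', Legal A r r' → phi c' r' ≤ phi c r - 1) := by
  decide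

lemma inv_lo : ∀ c r : Fin 8, 2 ≤ phi c r → ∀ c', Legal A c c' →
    c' ≠ r ∧ ∃ r', Legal A r r' ∧ phi c r - 1 ≤ phi c' r' := by
  decide

lemma catch_of : ∀ n (c r : Fin 8), phi c r ≤ n → phi c r ≤ 999 →
    CatchIn A 1 n (fun _ => c) r := by
  intro n
  induction n with
  | zero => exact fun c r h _ => CatchIn.caught ⟨0, inv0 c r (Nat.le_zero.1 h)⟩
  | succ n ih =>
    intro c r h h9
    rcases Nat.eq_zero_or_pos (phi c r) with h0 | h1
    · exact CatchIn.caught ⟨0, inv0 c r h0⟩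
    · obtain ⟨c', hleg, hcase⟩ := inv_up c r h1 h9
      rcases hcase with rfl | hall
      · exact CatchIn.stepCatch (fun _ => c') (fun _ => hleg) ⟨0, rfl⟩
      · refine CatchIn.step (fun _ => c') (fun _ => hleg) fun r' hr' => ?_
        have := hall r' hr'
        exact ih c' r' (by omega) (by omega)

lemma not_catch : ∀ {m : ℕ} {cf : Fin 1 → Fin 8} {r : Fin 8},
    CatchIn A 1 m cf r → m < phi (cf 0) r → False := by
  intro m cf r h
  induction h with
  | @caught t c r h =>
    intro hm
    obtain ⟨i, hi⟩ := h
    exact inv1 (c 0) r (by omega) (by rw [← Subsingleton.elim i (0 : Fin 1)]; exact hi)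
  | @stepCatch t c r c' hc h =>
    intro hm
    obtain ⟨i, hi⟩ := h
    have hne := (inv_lo (c 0) r (by omega) (c' 0) (hc 0)).1
    exact hne (by rw [← Subsingleton.elim i (0 : Fin 1)]; exact hi)
  | @step t c r c' hc h ih =>
    intro hm
    obtain ⟨-, r', hr', hphi⟩ := inv_lo (c 0) r (by omega) (c' 0) (hc 0)
    exact ih r' hr' (by omega)

lemma copValue_le {c r : Fin 8} {k : ℕ} (h : phi c r ≤ k) (h9 : k ≤ 999) :
    copValue A c r ≤ (k : ℕ∞) :=
  sInf_le ⟨k, rfl, catch_of k c r h (le_trans h h9)⟩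

lemma le_copValue {c r : Fin 8} {k : ℕ} (h : k ≤ phi c r) :
    (k : ℕ∞) ≤ copValue A c r := by
  refine le_sInf fun b hb => ?_
  obtain ⟨m, rfl, hc⟩ := hb
  have hm : ¬ (m < phi c r) := fun hlt => not_catch hc hlt
  exact Nat.cast_le.2 (by omega)

lemma no_zero {t : ℕ} {c : Fin 0 → Fin 8} {r : Fin 8} : ¬ CatchIn A 0 t c r := by
  intro h
  induction h with
  | caught h => exact h.choose.elim0
  | stepCatch c' hc h => exact h.choose.elim0
  | @step t c r c' hc h ih => exact ih r (Or.inl rfl)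

lemma copStep {cop rob : ℕ → Fin 8} (ho : OptimalPlay A cop rob) (t : ℕ)
    (hnc : NotCaughtBy cop rob t) {ct rt cs : Fin 8} {M : ℕ} (hM : M ≤ 999)
    (hct : cop t = ct) (hrt : rob t = rt)
    (hlegal : Legal A ct cs)
    (hne : ∀ x, Legal A ct x → x ≠ rt)
    (hub : ∀ x, Legal A rt x → phi cs x ≤ M)
    (hlb : ∀ x, Legal A ct x → x ≠ cs → ∃ r', Legal A rt r' ∧ M + 1 ≤ phi x r') :
    cop (t + 1) = cs := by
  by_contra hne2
  have hl2 : Legal A ct (cop (t + 1)) := by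
    have := ho.copLegal t hnc; rwa [hct] at this
  obtain ⟨r', hr', hphi⟩ := hlb _ hl2 hne2
  have h2 : copMoveVal A rt cs ≤ (M : ℕ∞) := by
    unfold copMoveVal
    rw [if_neg (hne cs hlegal)]
    exact iSup₂_le fun x hx => copValue_le (hub x hx) hM
  have h3 : ((M + 1 : ℕ) : ℕ∞) ≤ copMoveVal A rt (cop (t + 1)) := by
    unfold copMoveVal
    rw [if_neg (hne _ hl2)]
    exact le_trans (le_copValue hphi)
      (le_iSup₂ (f := fun x (_ : x ∈ {y : Fin 8 | Legal A rt y}) =>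
        copValue A (cop (t + 1)) x) r' hr')
  have h1 := ho.copOpt t hnc cs (by rw [hct]; exact hlegal)
  rw [hrt] at h1
  have hfin : ((M + 1 : ℕ) : ℕ∞) ≤ (M : ℕ∞) := le_trans h3 (le_trans h1 h2)
  have := Nat.cast_le.1 hfin
  omega

lemma robStep {cop rob : ℕ → Fin 8} (ho : OptimalPlay A cop rob) (t : ℕ)
    (hnc : NotCaughtBy cop rob t) {rt cs rs : Fin 8} {W : ℕ} (hW : 1 ≤ W) (hW9 : W ≤ 999)
    (hrt : rob t = rt) (hc1 : cop (t + 1) = cs) (hcsrt : cs ≠ rt)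
    (hlegal : Legal A rt rs) (hphi : W ≤ phi cs rs)
    (hub : ∀ x, Legal A rt x → x ≠ rs → phi cs x ≤ W - 1) :
    rob (t + 1) = rs := by
  by_contra hne2
  have hcr : cop (t + 1) ≠ rob t := by rw [hc1, hrt]; exact hcsrt
  have hr := ho.robOpt t hnc hcr rs (by rw [hrt]; exact hlegal)
  rw [hc1] at hr
  have hl := ho.robLegal t hnc hcr
  rw [hrt] at hl
  have h2 : copValue A cs (rob (t + 1)) ≤ ((W - 1 : ℕ) : ℕ∞) :=
    copValue_le (hub _ hl hne2) (by omega)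
  have h1 : (W : ℕ∞) ≤ copValue A cs (rob (t + 1)) := le_trans (le_copValue hphi) hr
  have := Nat.cast_le.1 (le_trans h1 h2)
  omega

end Ex14


/-- There is a cop-win oriented graph on which, in every optimal play, the cop
must revisit a vertex: at some round `s` (while the game is in progress) she
occupies a vertex she occupied at an earlier round `t` and had left in
between. -/
theorem stmt_14 :
    ∃ (V : Type) (_ : Fintype V) (A : V → V → Prop),
      IsOriented A ∧ copNumber A = 1 ∧
      ∀ cop rob : ℕ → V, OptimalPlay A cop rob →
        ∃ t m s : ℕ, t < m ∧ m < s ∧ NotCaughtBy cop rob (s - 1) ∧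
          cop s = cop t ∧ cop m ≠ cop t := by
  refine ⟨Fin 8, inferInstance, Ex14.A,
    (by decide : ∀ u v : Fin 8, Ex14.A u v → ¬ Ex14.A v u), ?_, ?_⟩
  · -- copNumber = 1
    have hw1 : CopsWin Ex14.A 1 := by
      refine ⟨6, fun _ => 3, fun r => ?_⟩
      have h := (by decide : ∀ r : Fin 8, Ex14.phi 3 r ≤ 6) r
      exact Ex14.catch_of 6 3 r h (by omega)
    have hnon : {k | CopsWin Ex14.A k}.Nonempty := ⟨1, hw1⟩
    have hz : ¬ CopsWin Ex14.A 0 := by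
      rintro ⟨t, c, hc⟩
      exact Ex14.no_zero (hc 3)
    have hs0 : sInf {k | CopsWin Ex14.A k} ≠ 0 := fun h => hz (h ▸ Nat.sInf_mem hnon)
    exact le_antisymm (Nat.sInf_le hw1) (Nat.one_le_iff_ne_zero.2 hs0)
  · intro cop rob ho
    have h0 : cop 0 = 3 := by
      by_contra hx
      obtain ⟨r0, hr0⟩ := (by decide : ∀ v : Fin 8, v ≠ 3 → ∃ r0, 7 ≤ Ex14.phi v r0) _ hx
      have hsup3 : (⨆ r : Fin 8, copValue Ex14.A 3 r) ≤ ((6 : ℕ) : ℕ∞) :=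
        iSup_le fun r =>
          Ex14.copValue_le ((by decide : ∀ r : Fin 8, Ex14.phi 3 r ≤ 6) r) (by omega)
      have h7 : ((7 : ℕ) : ℕ∞) ≤ ⨆ r, copValue Ex14.A (cop 0) r :=
        le_trans (Ex14.le_copValue hr0) (le_iSup _ r0)
      have hfin := le_trans h7 (le_trans (ho.copInit 3) hsup3)
      have := Nat.cast_le.1 hfin
      omega
    have r0 : rob 0 = 6 := by
      by_contra hx
      have hb := ho.robInit 6
      rw [h0] at hb
      have h6 : ((6 : ℕ) : ℕ∞) ≤ copValue Ex14.A 3 (rob 0) :=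
        le_trans (Ex14.le_copValue (by decide : 6 ≤ Ex14.phi 3 6)) hb
      have h5 : copValue Ex14.A 3 (rob 0) ≤ ((5 : ℕ) : ℕ∞) :=
        Ex14.copValue_le ((by decide : ∀ x : Fin 8, x ≠ 6 → Ex14.phi 3 x ≤ 5) _ hx)
          (by omega)
      have := Nat.cast_le.1 (le_trans h6 h5)
      omega
    have nc0 : NotCaughtBy cop rob 0 := by
      intro s hs
      interval_cases s
      exact ⟨by rw [h0, r0]; decide, fun h => absurd h (by omega)⟩
    have h1 : cop 1 = 5 :=
      Ex14.copStep ho 0 nc0 (M := 5) (by omega) h0 r0 (by decide) (by decide)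
        (by decide) (by decide)
    have r1 : rob 1 = 2 :=
      Ex14.robStep ho 0 nc0 (W := 5) (by omega) (by omega) r0 h1 (by decide)
        (by decide) (by decide) (by decide)
    have nc1 : NotCaughtBy cop rob 1 := by
      intro s hs
      interval_cases s
      · exact ⟨by rw [h0, r0]; decide, fun h => absurd h (by omega)⟩
      · exact ⟨by rw [h1, r1]; decide,
          fun _ => by rw [h1, show (1 : ℕ) - 1 = 0 from rfl, r0]; decide⟩
    have h2 : cop 2 = 0 :=
      Ex14.copStep ho 1 nc1 (M := 4) (by omega) h1 r1 (by decide) (by decide)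
        (by decide) (by decide)
    have r2 : rob 2 = 4 :=
      Ex14.robStep ho 1 nc1 (W := 4) (by omega) (by omega) r1 h2 (by decide)
        (by decide) (by decide) (by decide)
    have nc2 : NotCaughtBy cop rob 2 := by
      intro s hs
      interval_cases s
      · exact ⟨by rw [h0, r0]; decide, fun h => absurd h (by omega)⟩
      · exact ⟨by rw [h1, r1]; decide,
          fun _ => by rw [h1, show (1 : ℕ) - 1 = 0 from rfl, r0]; decide⟩
      · exact ⟨by rw [h2, r2]; decide,
          fun _ => by rw [h2, show (2 : ℕ) - 1 = 1 from rfl, r1]; decide⟩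
    have h3 : cop 3 = 7 :=
      Ex14.copStep ho 2 nc2 (M := 3) (by omega) h2 r2 (by decide) (by decide)
        (by decide) (by decide)
    have r3 : rob 3 = 4 :=
      Ex14.robStep ho 2 nc2 (W := 3) (by omega) (by omega) r2 h3 (by decide)
        (by decide) (by decide) (by decide)
    have nc3 : NotCaughtBy cop rob 3 := by
      intro s hs
      interval_cases s
      · exact ⟨by rw [h0, r0]; decide, fun h => absurd h (by omega)⟩
      · exact ⟨by rw [h1, r1]; decide,
          fun _ => by rw [h1, show (1 : ℕ) - 1 = 0 from rfl, r0]; decide⟩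
      · exact ⟨by rw [h2, r2]; decide,
          fun _ => by rw [h2, show (2 : ℕ) - 1 = 1 from rfl, r1]; decide⟩
      · exact ⟨by rw [h3, r3]; decide,
          fun _ => by rw [h3, show (3 : ℕ) - 1 = 2 from rfl, r2]; decide⟩
    have h4 : cop 4 = 1 :=
      Ex14.copStep ho 3 nc3 (M := 2) (by omega) h3 r3 (by decide) (by decide)
        (by decide) (by decide)
    have r4 : rob 4 = 4 :=
      Ex14.robStep ho 3 nc3 (W := 2) (by omega) (by omega) r3 h4 (by decide)
        (by decide) (by decide) (by decide)
    have nc4 : NotCaughtBy cop rob 4 := by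
      intro s hs
      interval_cases s
      · exact ⟨by rw [h0, r0]; decide, fun h => absurd h (by omega)⟩
      · exact ⟨by rw [h1, r1]; decide,
          fun _ => by rw [h1, show (1 : ℕ) - 1 = 0 from rfl, r0]; decide⟩
      · exact ⟨by rw [h2, r2]; decide,
          fun _ => by rw [h2, show (2 : ℕ) - 1 = 1 from rfl, r1]; decide⟩
      · exact ⟨by rw [h3, r3]; decide,
          fun _ => by rw [h3, show (3 : ℕ) - 1 = 2 from rfl, r2]; decide⟩
      · exact ⟨by rw [h4, r4]; decide,
          fun _ => by rw [h4, show (4 : ℕ) - 1 = 3 from rfl, r3]; decide⟩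
    have h5 : cop 5 = 5 :=
      Ex14.copStep ho 4 nc4 (M := 1) (by omega) h4 r4 (by decide) (by decide)
        (by decide) (by decide)
    refine ⟨1, 2, 5, by omega, by omega, nc4, ?_, ?_⟩
    · rw [h5, h1]
    · rw [h2, h1]; decide


end CopsRobbers
end

section
/- For every n ≥ 3, in the fully active game of cops and robbers on the directed cycle on n vertices, the minimum number of cops that can guarantee capture of the robber is exactly ⌈n/2⌉. -/
open Classical

universe u

namespace CopsRobbers

variable {V : Type u}

/-- `ActiveCatchIn A k t c r`: in the fully active game (every cop and the
robber must move along an out-arc on each of their turns; no player may stay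
put), with cops at `c` and robber at `r` and the cops to move, the cops can
force capture within `t` further rounds. -/
inductive ActiveCatchIn (A : V → V → Prop) (k : ℕ) : ℕ → (Fin k → V) → V → Prop
  | caught {t : ℕ} {c : Fin k → V} {r : V} (h : ∃ i, c i = r) :
      ActiveCatchIn A k t c r
  | stepCatch {t : ℕ} {c : Fin k → V} {r : V} (c' : Fin k → V)
      (hc : ∀ i, A (c i) (c' i)) (h : ∃ i, c' i = r) :
      ActiveCatchIn A k (t + 1) c r
  | step {t : ℕ} {c : Fin k → V} {r : V} (c' : Fin k → V)
      (hc : ∀ i, A (c i) (c' i))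
      (h : ∀ r' : V, A r r' → ActiveCatchIn A k t c' r') :
      ActiveCatchIn A k (t + 1) c r

/-- `k` cops win the fully active game. -/
def ActiveCopsWin (A : V → V → Prop) (k : ℕ) : Prop :=
  ∃ t : ℕ, ∃ c : Fin k → V, ∀ r : V, ActiveCatchIn A k t c r

/-- The fully active cop number. -/
noncomputable def activeCopNumber (A : V → V → Prop) : ℕ :=
  sInf {k | ActiveCopsWin A k}

/-- On the directed cycle, if no cop is at the robber's vertex or one step
behind it, the cops can never catch the robber in the fully active game. -/
lemma cycle_no_catch (n k t : ℕ) (c : Fin k → ZMod n) (r : ZMod n)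
    (h : ∀ i, c i ≠ r ∧ c i + 1 ≠ r) :
    ¬ ActiveCatchIn (fun u v : ZMod n => v = u + 1) k t c r := by
  induction t generalizing c r with
  | zero =>
    intro hcat
    cases hcat with
    | caught hex => obtain ⟨i, hi⟩ := hex; exact (h i).1 hi
  | succ t ih =>
    intro hcat
    cases hcat with
    | caught hex => obtain ⟨i, hi⟩ := hex; exact (h i).1 hi
    | stepCatch c' hc hex =>
      obtain ⟨i, hi⟩ := hex
      exact (h i).2 ((hc i) ▸ hi)
    | step c' hc hr =>
      refine ih c' (r + 1) ?_ (hr (r + 1) rfl)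
      intro i
      rw [hc i]
      constructor
      · intro heq
        exact (h i).1 (by exact add_right_cancel heq)
      · intro heq
        exact (h i).2 (by exact add_right_cancel heq)

/-- For every `n ≥ 3`, the fully active cop number of the directed cycle on
`n` vertices is exactly `⌈n / 2⌉`. -/
theorem stmt_18 (n : ℕ) (hn : 3 ≤ n) :
    activeCopNumber (fun u v : ZMod n => v = u + 1) = (n + 1) / 2 := by
  haveI : NeZero n := ⟨by omega⟩
  set A : ZMod n → ZMod n → Prop := fun u v => v = u + 1 with hA
  -- upper bound: (n+1)/2 cops win
  have hwin : ActiveCopsWin A ((n + 1) / 2) := by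
    refine ⟨1, fun j => ((2 * (j : ℕ) : ℕ) : ZMod n), fun r => ?_⟩
    set m := r.val with hm
    have hmlt : m < n := ZMod.val_lt r
    have hmr : ((m : ℕ) : ZMod n) = r := ZMod.natCast_rightInverse r
    have hj : m / 2 < (n + 1) / 2 := by omega
    rcases Nat.even_or_odd m with he | ho
    · refine ActiveCatchIn.caught ⟨⟨m / 2, hj⟩, ?_⟩
      have : 2 * (m / 2) = m := by rw [Nat.even_iff] at he; omega
      simp only [this]
      exact hmr
    · refine ActiveCatchIn.stepCatch (fun i => ((2 * (i : ℕ) : ℕ) : ZMod n) + 1)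
        (fun i => rfl) ⟨⟨m / 2, hj⟩, ?_⟩
      have h2 : 2 * (m / 2) + 1 = m := by rw [Nat.odd_iff] at ho; omega
      calc ((2 * (m / 2) : ℕ) : ZMod n) + 1 = ((2 * (m / 2) + 1 : ℕ) : ZMod n) := by push_cast; ring
        _ = ((m : ℕ) : ZMod n) := by rw [h2]
        _ = r := hmr
  -- lower bound: fewer cops lose
  have hlow : ∀ k, ActiveCopsWin A k → (n + 1) / 2 ≤ k := by
    intro k hk
    by_contra hlt
    push_neg at hlt
    have h2k : 2 * k < n := by omega
    obtain ⟨t, c, hc⟩ := hk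
    set S : Finset (ZMod n) :=
      (Finset.univ.image c) ∪ (Finset.univ.image fun i => c i + 1) with hS
    have hcard : S.card < Fintype.card (ZMod n) := by
      rw [ZMod.card n]
      calc S.card ≤ (Finset.univ.image c).card
            + (Finset.univ.image fun i : Fin k => c i + 1).card := Finset.card_union_le _ _
        _ ≤ k + k := by
            have h1 := Finset.card_image_le (s := (Finset.univ : Finset (Fin k))) (f := c)
            have h2 := Finset.card_image_le (s := (Finset.univ : Finset (Fin k)))
              (f := fun i => c i + 1)
            simp only [Finset.card_univ, Fintype.card_fin] at h1 h2
            omega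
        _ < n := by omega
    have hex : ∃ r : ZMod n, r ∉ S := by
      by_contra hcon
      push_neg at hcon
      have : S = Finset.univ := Finset.eq_univ_iff_forall.mpr hcon
      rw [this, Finset.card_univ] at hcard
      exact lt_irrefl _ hcard
    obtain ⟨r, hr⟩ := hex
    have hnotmem : ∀ i, c i ≠ r ∧ c i + 1 ≠ r := by
      intro i
      constructor
      · intro heq
        exact hr (Finset.mem_union_left _ (Finset.mem_image.mpr ⟨i, Finset.mem_univ i, heq⟩))
      · intro heq
        exact hr (Finset.mem_union_right _ (Finset.mem_image.mpr ⟨i, Finset.mem_univ i, heq⟩))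
    exact cycle_no_catch n k t c r hnotmem (hc r)
  have hne : {k | ActiveCopsWin A k}.Nonempty := ⟨(n + 1) / 2, hwin⟩
  refine le_antisymm (Nat.sInf_le hwin) (hlow _ (Nat.sInf_mem hne))

end CopsRobbers
end

section
/- If a finite oriented graph D contains exactly one source (vertex of in-degree 0) and no directed cycles, then the cop number of D equals 1. -/
open Classical

universe u

namespace CopsRobbers

variable {V : Type u}

section Aux

open Classical in
/-- The rank of a vertex: the number of strict predecessors. -/
noncomputable def rnk [Fintype V] (A : V → V → Prop) (r : V) : ℕ :=
  (Finset.univ.filter fun u => Relation.TransGen A u r).card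

lemma rnk_le_card [Fintype V] (A : V → V → Prop) (r : V) :
    rnk A r ≤ Fintype.card V := by
  classical
  exact (Finset.card_filter_le _ _).trans (le_of_eq (Finset.card_univ))

lemma rnk_lt [Fintype V] {A : V → V → Prop}
    (hacyclic : ∀ v : V, ¬ Relation.TransGen A v v) {r r' : V} (h : A r r') :
    rnk A r < rnk A r' := by
  classical
  have hsub : (Finset.univ.filter fun u => Relation.TransGen A u r) ⊆
      (Finset.univ.filter fun u => Relation.TransGen A u r') := by
    intro u hu
    simp only [Finset.mem_filter, Finset.mem_univ, true_and] at hu ⊢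
    exact hu.tail h
  have hmem : r ∈ (Finset.univ.filter fun u => Relation.TransGen A u r') := by
    simp only [Finset.mem_filter, Finset.mem_univ, true_and]
    exact Relation.TransGen.single h
  have hnot : r ∉ (Finset.univ.filter fun u => Relation.TransGen A u r) := by
    simp only [Finset.mem_filter, Finset.mem_univ, true_and]
    exact hacyclic r
  exact Finset.card_lt_card ((Finset.ssubset_iff_of_subset hsub).2 ⟨r, hmem, hnot⟩)

/-- `PathLen A n u v`: there is a directed walk of length `n` from `u` to `v`. -/
def PathLen (A : V → V → Prop) : ℕ → V → V → Prop
  | 0, u, v => u = v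
  | n+1, u, v => ∃ w, A u w ∧ PathLen A n w v

lemma PathLen.snoc {A : V → V → Prop} :
    ∀ {n : ℕ} {u v w : V}, PathLen A n u v → A v w → PathLen A (n+1) u w := by
  intro n
  induction n with
  | zero => intro u v w h hvw; exact ⟨w, h ▸ hvw, rfl⟩
  | succ n ih =>
    intro u v w h hvw
    obtain ⟨x, hux, hx⟩ := h
    exact ⟨x, hux, ih hx hvw⟩

lemma exists_pathLen {A : V → V → Prop} {u v : V}
    (h : Relation.ReflTransGen A u v) : ∃ n, PathLen A n u v := by
  induction h with
  | refl => exact ⟨0, rfl⟩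
  | tail _ hbc ih => obtain ⟨n, hn⟩ := ih; exact ⟨n+1, hn.snoc hbc⟩

lemma pathLen_rnk [Fintype V] {A : V → V → Prop}
    (hacyclic : ∀ v : V, ¬ Relation.TransGen A v v) :
    ∀ {d : ℕ} {u v : V}, PathLen A d u v → rnk A u + d ≤ rnk A v := by
  intro d
  induction d with
  | zero => intro u v h; cases h; omega
  | succ d ih =>
    intro u v h
    obtain ⟨w, huw, hw⟩ := h
    have h1 := ih hw
    have h2 := rnk_lt hacyclic huw
    omega

lemma CatchIn.mono {A : V → V → Prop} {k : ℕ} :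
    ∀ {t t' : ℕ} {c : Fin k → V} {r : V},
      CatchIn A k t c r → t ≤ t' → CatchIn A k t' c r := by
  intro t t' c r h
  induction h generalizing t' with
  | caught h => exact fun _ => .caught h
  | stepCatch c' hc h =>
    intro ht
    obtain ⟨t'', rfl⟩ : ∃ t'', t' = t'' + 1 := ⟨t' - 1, by omega⟩
    exact .stepCatch c' hc h
  | step c' hc h ih =>
    intro ht
    obtain ⟨t'', rfl⟩ : ∃ t'', t' = t'' + 1 := ⟨t' - 1, by omega⟩
    exact .step c' hc fun r' hr' => ih r' hr' (by omega)

lemma one_cop_catches [Fintype V] {A : V → V → Prop}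
    (hacyclic : ∀ v : V, ¬ Relation.TransGen A v v) :
    ∀ m d (c r : V), PathLen A d c r →
      d + (Fintype.card V - rnk A r) ≤ m → CatchIn A 1 m (fun _ => c) r := by
  intro m
  induction m using Nat.strong_induction_on with
  | _ m ih =>
    intro d c r hp hm
    match d, hp with
    | 0, hp => exact .caught ⟨0, hp⟩
    | e+1, ⟨w, hcw, hp⟩ =>
      obtain ⟨t, rfl⟩ : ∃ t, m = t + 1 := ⟨m - 1, by omega⟩
      refine .step (fun _ => w) (fun _ => Or.inr hcw) ?_
      intro r' hr'
      rcases hr' with rfl | hr'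
      · exact ih t (by omega) e w r' hp (by omega)
      · have h1 := rnk_lt hacyclic hr'
        have h2 := rnk_le_card A r'
        have h3 := rnk_le_card A r
        exact ih t (by omega) (e+1) w r' (hp.snoc hr') (by omega)

lemma no_cop_never [Fintype V] {A : V → V → Prop} {t : ℕ} {c : Fin 0 → V} {r : V} :
    ¬ CatchIn A 0 t c r := by
  intro h
  induction h with
  | caught h => exact h.choose.elim0
  | stepCatch c' hc h => exact h.choose.elim0
  | step c' hc h ih => exact ih _ (Or.inl rfl)

end Aux

/-- A finite oriented graph with exactly one source and no directed cycles has
cop number `1`. -/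
theorem stmt_19 {V : Type u} [Fintype V] (A : V → V → Prop)
    (hA : IsOriented A) (hsource : ∃! s : V, ∀ u : V, ¬ A u s)
    (hacyclic : ∀ v : V, ¬ Relation.TransGen A v v) :
    copNumber A = 1 := by
  obtain ⟨s, hs, huniq⟩ := hsource
  -- every vertex is reachable from the unique source
  have key : ∀ n, ∀ v : V, rnk A v ≤ n → Relation.ReflTransGen A s v := by
    intro n
    induction n with
    | zero =>
      intro v hv
      by_cases h : ∃ u, A u v
      · exfalso
        obtain ⟨u, hu⟩ := h
        have := rnk_lt hacyclic hu
        omega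
      · push_neg at h
        have : v = s := huniq v h
        exact this ▸ Relation.ReflTransGen.refl
    | succ n ihn =>
      intro v hv
      by_cases h : ∃ u, A u v
      · obtain ⟨u, hu⟩ := h
        have h1 := rnk_lt hacyclic hu
        exact (ihn u (by omega)).tail hu
      · push_neg at h
        have : v = s := huniq v h
        exact this ▸ Relation.ReflTransGen.refl
  have hwin : CopsWin A 1 := by
    refine ⟨Fintype.card V, fun _ => s, fun r => ?_⟩
    obtain ⟨d, hp⟩ := exists_pathLen (key (rnk A r) r le_rfl)
    have h1 := pathLen_rnk hacyclic hp
    have h2 := rnk_le_card A r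
    exact one_cop_catches hacyclic _ d s r hp (by omega)
  have h1 : copNumber A ≤ 1 := Nat.sInf_le hwin
  have hmem : copNumber A ∈ {k | CopsWin A k} := Nat.sInf_mem ⟨1, hwin⟩
  have h0 : copNumber A ≠ 0 := by
    intro h
    rw [h] at hmem
    obtain ⟨t, c, hc⟩ := hmem
    exact no_cop_never (hc s)
  omega

end CopsRobbers
end
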